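/- arXiv:2211.01023 — 7 statements merged into one kernel-verified Lean document; each statement's English description precedes it below -/
import Mathlib

section
/- Let γ : [0,∞) → X be an (L,θ)-ray in a proper geodesic metric space X based at 𝔬 (i.e., γ(0) = 𝔬 and (1/L)|s−t| − θ(max(s,t)) ≤ d(γ(s),γ(t)) ≤ L|s−t| + θ(max(s,t)) for all s,t ≥ 0). Then there exist a constant n > 0 and a continuous map γ̂ : [0,∞) → X which is an (L, n·θ)-ray, agrees with γ at every nonnegative integer, and satisfies d(γ(t), γ̂(t)) ≤ n·θ(t) for all t ≥ 0. -/
open Metric Set Filter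

/-- `γ` is an `(L,θ)`-ray based at `o`. -/
def IsRay {X : Type*} [MetricSpace X] (o : X) (L : ℝ) (θ : ℝ → ℝ) (γ : ℝ → X) : Prop :=
  γ 0 = o ∧ ∀ s t : ℝ, 0 ≤ s → 0 ≤ t →
    (1 / L) * |s - t| - θ (max s t) ≤ dist (γ s) (γ t) ∧
    dist (γ s) (γ t) ≤ L * |s - t| + θ (max s t)

/-- `X` is a geodesic metric space: any two points are joined by an isometrically
embedded segment. -/
def IsGeodesicSpace (X : Type*) [MetricSpace X] : Prop :=
  ∀ x y : X, ∃ g : ℝ → X, g 0 = x ∧ g (dist x y) = y ∧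
    ∀ s t : ℝ, s ∈ Set.Icc 0 (dist x y) → t ∈ Set.Icc 0 (dist x y) →
      dist (g s) (g t) = |s - t|

/-- Connect-the-dots: any `(L,θ)`-ray in a proper geodesic space admits a
continuous completion, which is an `(L, n·θ)`-ray agreeing with `γ` at every
nonnegative integer, and staying within `n·θ(t)` of `γ(t)` for all `t`. -/
theorem connect_the_dots
    {X : Type*} [MetricSpace X] [ProperSpace X] (hgeo : IsGeodesicSpace X)
    (o : X) (L : ℝ) (hL : 1 ≤ L) (θ : ℝ → ℝ)
    (hθc : ConcaveOn ℝ (Set.Ici 0) θ) (hθm : Monotone θ) (hθ1 : ∀ r : ℝ, 1 ≤ θ r)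
    (hθsub : Tendsto (fun r => θ r / r) atTop (nhds 0))
    (γ : ℝ → X) (hγ : IsRay o L θ γ) :
    ∃ n > (0:ℝ), ∃ γhat : ℝ → X,
      ContinuousOn γhat (Set.Ici 0) ∧
      IsRay o L (fun t => n * θ t) γhat ∧
      (∀ k : ℕ, γhat k = γ k) ∧
      (∀ t : ℝ, 0 ≤ t → dist (γ t) (γhat t) ≤ n * θ t) := by
  classical
  obtain ⟨hγ0, hγd⟩ := hγ
  have hL0 : (0:ℝ) < L := lt_of_lt_of_le one_pos hL
  have hθ0 : ∀ r : ℝ, (0:ℝ) < θ r := fun r => lt_of_lt_of_le one_pos (hθ1 r)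
  -- subadditivity step from concavity
  have hstep : ∀ t : ℝ, 0 ≤ t → θ (t + 1) ≤ θ t + θ 1 := by
    intro t ht
    rcases eq_or_lt_of_le ht with h | h
    · rw [← h]; norm_num; linarith [hθ0 0]
    · have ht1 : (0:ℝ) < t + 1 := by linarith
      have hmem1 : t + 1 ∈ Set.Ici (0:ℝ) := by simp; linarith
      have hmem0 : (0:ℝ) ∈ Set.Ici (0:ℝ) := Set.mem_Ici.mpr (le_refl 0)
      have h1 := hθc.2 hmem1 hmem0 (show (0:ℝ) ≤ t/(t+1) by positivity)
        (show (0:ℝ) ≤ 1/(t+1) by positivity) (by rw [← add_div, div_self (by linarith : t+1 ≠ 0)])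
      have h2 := hθc.2 hmem1 hmem0 (show (0:ℝ) ≤ 1/(t+1) by positivity)
        (show (0:ℝ) ≤ t/(t+1) by positivity) (by rw [← add_div, add_comm (1:ℝ) t, div_self (by linarith : t+1 ≠ 0)])
      simp only [smul_eq_mul, mul_zero, add_zero] at h1 h2
      rw [show t/(t+1) * (t+1) = t by field_simp] at h1
      rw [show 1/(t+1) * (t+1) = 1 by field_simp] at h2
      rw [show t/(t+1) = 1 - 1/(t+1) by field_simp; ring] at h1 h2
      have := hθ0 0
      linarith
  -- choose the geodesics
  choose g hg0 hg1 hgd using fun k : ℕ => hgeo (γ (k:ℝ)) (γ ((k:ℝ)+1))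
  set d : ℕ → ℝ := fun k => dist (γ (k:ℝ)) (γ ((k:ℝ)+1)) with hd
  have hdeq : ∀ k : ℕ, d k = dist (γ (k:ℝ)) (γ ((k:ℝ)+1)) := fun _ => rfl
  have hd0 : ∀ k : ℕ, 0 ≤ d k := fun k => dist_nonneg
  have hdub : ∀ k : ℕ, d k ≤ L + θ ((k:ℝ)+1) := by
    intro k
    have h := (hγd (k:ℝ) ((k:ℝ)+1) (by positivity) (by positivity)).2
    have h1 : |(k:ℝ) - ((k:ℝ)+1)| = 1 := by rw [abs_sub_comm]; norm_num
    have h2 : max (k:ℝ) ((k:ℝ)+1) = (k:ℝ)+1 := max_eq_right (by linarith)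
    rw [h1, h2] at h
    rw [hdeq]; linarith
  set F : ℝ → X := fun t => g ⌊t⌋₊ ((t - (⌊t⌋₊:ℝ)) * d ⌊t⌋₊) with hF
  have hFeq : ∀ t : ℝ, F t = g ⌊t⌋₊ ((t - (⌊t⌋₊:ℝ)) * d ⌊t⌋₊) := fun _ => rfl
  -- F at integers
  have hnat : ∀ k : ℕ, F (k:ℝ) = γ (k:ℝ) := by
    intro k
    rw [hFeq]
    simp only [Nat.floor_natCast, sub_self, zero_mul]
    exact hg0 k
  -- distance from F t to the node γ ⌊t⌋₊
  have hnode : ∀ t : ℝ, 0 ≤ t →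
      dist (F t) (γ ((⌊t⌋₊:ℕ):ℝ)) = (t - (⌊t⌋₊:ℝ)) * d ⌊t⌋₊ := by
    intro t ht
    have hfl : ((⌊t⌋₊:ℕ):ℝ) ≤ t := Nat.floor_le ht
    have hfu : t < (⌊t⌋₊:ℝ) + 1 := Nat.lt_floor_add_one t
    have hmem : (t - (⌊t⌋₊:ℝ)) * d ⌊t⌋₊ ∈
        Set.Icc 0 (dist (γ ((⌊t⌋₊:ℕ):ℝ)) (γ (((⌊t⌋₊:ℕ):ℝ)+1))) := by
      rw [← hdeq]
      constructor
      · exact mul_nonneg (by linarith) (hd0 _)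
      · nlinarith [hd0 ⌊t⌋₊]
    have hmem0 : (0:ℝ) ∈ Set.Icc 0 (dist (γ ((⌊t⌋₊:ℕ):ℝ)) (γ (((⌊t⌋₊:ℕ):ℝ)+1))) :=
      ⟨le_refl 0, dist_nonneg⟩
    rw [hFeq, ← hg0 ⌊t⌋₊, hgd ⌊t⌋₊ _ _ hmem hmem0, sub_zero,
      abs_of_nonneg (mul_nonneg (by linarith) (hd0 _))]
  set c : ℝ := 2*L + θ 1 + 2 with hc
  have hc0 : (0:ℝ) < c := by have := hθ0 1; rw [hc]; linarith
  clear_value c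
  -- F stays close to γ
  have hclose : ∀ t : ℝ, 0 ≤ t → dist (γ t) (F t) ≤ c * θ t := by
    intro t ht
    have hfl : ((⌊t⌋₊:ℕ):ℝ) ≤ t := Nat.floor_le ht
    have hfu : t < (⌊t⌋₊:ℝ) + 1 := Nat.lt_floor_add_one t
    have h1 := (hγd t ((⌊t⌋₊:ℕ):ℝ) ht (by positivity)).2
    rw [abs_of_nonneg (by linarith : (0:ℝ) ≤ t - ((⌊t⌋₊:ℕ):ℝ)),
      max_eq_left hfl] at h1
    have h2 : dist (γ ((⌊t⌋₊:ℕ):ℝ)) (F t) = (t - (⌊t⌋₊:ℝ)) * d ⌊t⌋₊ := by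
      rw [dist_comm]; exact hnode t ht
    have h3 : (t - (⌊t⌋₊:ℝ)) * d ⌊t⌋₊ ≤ d ⌊t⌋₊ := by nlinarith [hd0 ⌊t⌋₊]
    have h4 : d ⌊t⌋₊ ≤ L + θ ((⌊t⌋₊:ℝ)+1) := hdub ⌊t⌋₊
    have h5 : θ ((⌊t⌋₊:ℝ)+1) ≤ θ (t+1) := hθm (by linarith)
    have h6 : θ (t+1) ≤ θ t + θ 1 := hstep t ht
    have htri := dist_triangle (γ t) (γ ((⌊t⌋₊:ℕ):ℝ)) (F t)
    have hLb : L * (t - ((⌊t⌋₊:ℕ):ℝ)) ≤ L := by nlinarith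
    have := hθ1 t
    nlinarith [hθ0 1, mul_le_mul_of_nonneg_right (hθ1 t) (le_of_lt hL0),
      mul_le_mul_of_nonneg_right (hθ1 t) (le_of_lt (hθ0 1))]
  -- short-range Lipschitz-type bound for F
  have hA : ∀ s t : ℝ, 0 ≤ s → s ≤ t → t ≤ s + 1 →
      dist (F s) (F t) ≤ (t - s) * (L + θ (t+1)) := by
    intro s t hs hst hts
    have ht : 0 ≤ t := hs.trans hst
    have hks : ((⌊s⌋₊:ℕ):ℝ) ≤ s := Nat.floor_le hs
    have hks' : s < (⌊s⌋₊:ℝ) + 1 := Nat.lt_floor_add_one s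
    have hkt : ((⌊t⌋₊:ℕ):ℝ) ≤ t := Nat.floor_le ht
    have hkt' : t < (⌊t⌋₊:ℝ) + 1 := Nat.lt_floor_add_one t
    have hmono : ⌊s⌋₊ ≤ ⌊t⌋₊ := Nat.floor_mono hst
    have hθk : θ (((⌊s⌋₊:ℕ):ℝ)+1) ≤ θ (t+1) := hθm (by linarith)
    rcases eq_or_lt_of_le hmono with he | hlt
    · -- same unit interval
      have hmem1 : (s - (⌊s⌋₊:ℝ)) * d ⌊s⌋₊ ∈
          Set.Icc 0 (dist (γ ((⌊s⌋₊:ℕ):ℝ)) (γ (((⌊s⌋₊:ℕ):ℝ)+1))) := by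
        rw [← hdeq]
        exact ⟨mul_nonneg (by linarith) (hd0 _), by nlinarith [hd0 ⌊s⌋₊]⟩
      have hkte : ((⌊t⌋₊:ℕ):ℝ) = ((⌊s⌋₊:ℕ):ℝ) := by exact_mod_cast he.symm
      have hmem2 : (t - (⌊s⌋₊:ℝ)) * d ⌊s⌋₊ ∈
          Set.Icc 0 (dist (γ ((⌊s⌋₊:ℕ):ℝ)) (γ (((⌊s⌋₊:ℕ):ℝ)+1))) := by
        rw [← hdeq]
        constructor
        · exact mul_nonneg (by linarith) (hd0 _)
        · have : t < (⌊s⌋₊:ℝ) + 1 := by rw [← hkte]; exact hkt'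
          nlinarith [hd0 ⌊s⌋₊]
      have : dist (F s) (F t) = (t - s) * d ⌊s⌋₊ := by
        rw [hFeq, hFeq, ← he, hgd ⌊s⌋₊ _ _ hmem1 hmem2]
        rw [show (s - (⌊s⌋₊:ℝ)) * d ⌊s⌋₊ - (t - (⌊s⌋₊:ℝ)) * d ⌊s⌋₊
            = -((t - s) * d ⌊s⌋₊) by ring, abs_neg,
          abs_of_nonneg (mul_nonneg (by linarith) (hd0 _))]
      rw [this]
      have hdb : d ⌊s⌋₊ ≤ L + θ (t+1) := le_trans (hdub ⌊s⌋₊) (by linarith)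
      nlinarith [hd0 ⌊s⌋₊]
    · -- crossing one node
      have hm : ⌊t⌋₊ = ⌊s⌋₊ + 1 := by
        have h1 : t < ((⌊s⌋₊ + 2 : ℕ):ℝ) := by push_cast; linarith
        have := (Nat.floor_lt ht).2 h1
        omega
      have hmr : ((⌊t⌋₊:ℕ):ℝ) = ((⌊s⌋₊:ℕ):ℝ) + 1 := by rw [hm]; push_cast; ring
      have hsm : s ≤ ((⌊t⌋₊:ℕ):ℝ) := by rw [hmr]; linarith
      -- dist from F s to the node
      have hmem1 : (s - (⌊s⌋₊:ℝ)) * d ⌊s⌋₊ ∈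
          Set.Icc 0 (dist (γ ((⌊s⌋₊:ℕ):ℝ)) (γ (((⌊s⌋₊:ℕ):ℝ)+1))) := by
        rw [← hdeq]
        exact ⟨mul_nonneg (by linarith) (hd0 _), by nlinarith [hd0 ⌊s⌋₊]⟩
      have hmem2 : d ⌊s⌋₊ ∈
          Set.Icc 0 (dist (γ ((⌊s⌋₊:ℕ):ℝ)) (γ (((⌊s⌋₊:ℕ):ℝ)+1))) := by
        rw [← hdeq]; exact ⟨hd0 _, le_refl _⟩
      have hnode1 : dist (F s) (γ ((⌊t⌋₊:ℕ):ℝ)) = (((⌊t⌋₊:ℕ):ℝ) - s) * d ⌊s⌋₊ := by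
        have hg1' : γ ((⌊t⌋₊:ℕ):ℝ) = g ⌊s⌋₊ (d ⌊s⌋₊) := by
          rw [hmr, ← hg1 ⌊s⌋₊, hdeq]
        rw [hFeq, hg1', hgd ⌊s⌋₊ _ _ hmem1 hmem2]
        rw [show (s - (⌊s⌋₊:ℝ)) * d ⌊s⌋₊ - d ⌊s⌋₊
            = -((((⌊s⌋₊:ℝ) + 1) - s) * d ⌊s⌋₊) by ring, abs_neg,
          abs_of_nonneg (mul_nonneg (by linarith) (hd0 _)), hmr]
      have hnode2 : dist (γ ((⌊t⌋₊:ℕ):ℝ)) (F t) = (t - (⌊t⌋₊:ℝ)) * d ⌊t⌋₊ := by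
        rw [dist_comm]; exact hnode t ht
      have htri := dist_triangle (F s) (γ ((⌊t⌋₊:ℕ):ℝ)) (F t)
      rw [hnode1, hnode2] at htri
      have hdb1 : d ⌊s⌋₊ ≤ L + θ (t+1) := le_trans (hdub ⌊s⌋₊) (by linarith)
      have hdb2 : d ⌊t⌋₊ ≤ L + θ (t+1) := by
        refine le_trans (hdub ⌊t⌋₊) ?_
        have : θ (((⌊t⌋₊:ℕ):ℝ)+1) ≤ θ (t+1) := hθm (by linarith)
        linarith
      linarith [mul_le_mul_of_nonneg_left hdb1 (show (0:ℝ) ≤ ((⌊t⌋₊:ℕ):ℝ) - s by linarith),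
        mul_le_mul_of_nonneg_left hdb2 (show (0:ℝ) ≤ t - ((⌊t⌋₊:ℕ):ℝ) by linarith)]
  refine ⟨2*c + 1, by linarith, F, ?_, ?_, ?_, ?_⟩
  · -- continuity
    intro x hx
    have hx0 : (0:ℝ) ≤ x := hx
    rw [Metric.continuousWithinAt_iff]
    intro ε hε
    set C : ℝ := L + θ (x+2) with hC
    have hCpos : (0:ℝ) < C := by have := hθ0 (x+2); rw [hC]; linarith
    refine ⟨min 1 (ε/C), lt_min one_pos (by positivity), ?_⟩
    intro y hy hyd
    rw [Real.dist_eq] at hyd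
    have h1 : |y - x| < 1 := lt_of_lt_of_le hyd (min_le_left _ _)
    have h2 : |y - x| < ε / C := lt_of_lt_of_le hyd (min_le_right _ _)
    have hab1 := abs_lt.1 h1
    have hab2 := abs_lt.1 h2
    rcases le_total y x with h | h
    · have hAb := hA y x hy h (by linarith)
      have hle : (x - y) * (L + θ (x+1)) ≤ (x - y) * C := by
        have : θ (x+1) ≤ θ (x+2) := hθm (by linarith)
        apply mul_le_mul_of_nonneg_left (by rw [hC]; linarith) (by linarith)
      have hlt : (x - y) * C < ε := (lt_div_iff₀ hCpos).1 (by linarith)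
      calc dist (F y) (F x) ≤ (x - y) * (L + θ (x+1)) := hAb
        _ ≤ (x - y) * C := hle
        _ < ε := hlt
    · have hAb := hA x y hx0 h (by linarith)
      have hle : (y - x) * (L + θ (y+1)) ≤ (y - x) * C := by
        have : θ (y+1) ≤ θ (x+2) := hθm (by linarith)
        apply mul_le_mul_of_nonneg_left (by rw [hC]; linarith) (by linarith)
      have hlt : (y - x) * C < ε := (lt_div_iff₀ hCpos).1 (by linarith)
      calc dist (F y) (F x) = dist (F x) (F y) := dist_comm _ _
        _ ≤ (y - x) * (L + θ (y+1)) := hAb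
        _ ≤ (y - x) * C := hle
        _ < ε := hlt
  · -- IsRay
    constructor
    · have h := hnat 0
      rw [Nat.cast_zero] at h
      rw [h]; exact hγ0
    · intro s t hs ht
      have hms : θ s ≤ θ (max s t) := hθm (le_max_left s t)
      have hmt : θ t ≤ θ (max s t) := hθm (le_max_right s t)
      have hcs : c * θ s ≤ c * θ (max s t) := mul_le_mul_of_nonneg_left hms hc0.le
      have hct : c * θ t ≤ c * θ (max s t) := mul_le_mul_of_nonneg_left hmt hc0.le
      have hγst := hγd s t hs ht
      have hcls := hclose s hs
      have hclt := hclose t ht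
      have htriL := dist_triangle4 (γ s) (F s) (F t) (γ t)
      have htriU := dist_triangle4 (F s) (γ s) (γ t) (F t)
      have e1 : dist (F s) (γ s) = dist (γ s) (F s) := dist_comm _ _
      have e2 : dist (F t) (γ t) = dist (γ t) (F t) := dist_comm _ _
      have e3 : dist (γ t) (F t) = dist (F t) (γ t) := dist_comm _ _
      constructor
      · show (1/L) * |s-t| - (2*c+1) * θ (max s t) ≤ dist (F s) (F t)
        have := hγst.1
        linarith [hcls, hclt, hcs, hct, dist_comm (γ s) (F s), dist_comm (γ t) (F t)]
      · show dist (F s) (F t) ≤ L * |s-t| + (2*c+1) * θ (max s t)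
        have := hγst.2
        linarith [hcls, hclt, hcs, hct, dist_comm (γ s) (F s), dist_comm (γ t) (F t)]
  · -- agreement at naturals
    exact hnat
  · intro t ht
    have := hclose t ht
    have := hθ0 t
    nlinarith
end

section
/- Let α and β be (L,θ)-rays in a proper geodesic metric space X based at the same point. If lim_{t→∞} d(α(t), β)/t = 0 (where d(α(t),β) = inf_s d(α(t),β(s))), then lim_{t→∞} d(β(t), α)/t = 0. In other words, the relation of sublinear tracking between sublinear rays is symmetric. -/
open Metric Set Filter

private lemma theta_linear_bound {θ : ℝ → ℝ} (hθm : Monotone θ) (hθ1 : ∀ r : ℝ, 1 ≤ θ r)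
    (hθsub : Tendsto (fun r => θ r / r) atTop (nhds 0)) {δ : ℝ} (hδ : 0 < δ) :
    ∃ C : ℝ, 1 ≤ C ∧ ∀ u : ℝ, 0 ≤ u → θ u ≤ δ * u + C := by
  obtain ⟨U, hU⟩ := eventually_atTop.1 (hθsub.eventually (gt_mem_nhds hδ))
  refine ⟨θ (max U 1), hθ1 _, fun u hu => ?_⟩
  rcases le_or_gt u (max U 1) with h | h
  · have h2 := hθm h
    linarith [mul_nonneg hδ.le hu]
  · have h1 : (1:ℝ) ≤ u := le_of_lt (lt_of_le_of_lt (le_max_right U 1) h)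
    have h2 := hU u (le_of_lt (lt_of_le_of_lt (le_max_left U 1) h))
    rw [div_lt_iff₀ (by linarith)] at h2
    linarith [hθ1 (max U 1)]

set_option maxHeartbeats 3200000 in
/-- Symmetry of sublinear tracking between `(L,θ)`-rays: if `α` sublinearly
tracks `β`, then `β` sublinearly tracks `α`. -/
theorem sublinear_tracking_symm
    {X : Type*} [MetricSpace X] [ProperSpace X] (hgeo : IsGeodesicSpace X)
    (o : X) (L : ℝ) (hL : 1 ≤ L)
    (θ : ℝ → ℝ) (hθc : ConcaveOn ℝ (Set.Ici 0) θ) (hθm : Monotone θ)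
    (hθ1 : ∀ r : ℝ, 1 ≤ θ r)
    (hθsub : Tendsto (fun r => θ r / r) atTop (nhds 0))
    (α β : ℝ → X) (hα : IsRay o L θ α) (hβ : IsRay o L θ β)
    (htrack : Tendsto (fun t => infDist (α t) (β '' Set.Ici 0) / t) atTop (nhds 0)) :
    Tendsto (fun t => infDist (β t) (α '' Set.Ici 0) / t) atTop (nhds 0) := by
  classical
  obtain ⟨hα0, hαd⟩ := hα
  obtain ⟨hβ0, hβd⟩ := hβ
  have hL0 : (0:ℝ) < L := lt_of_lt_of_le one_pos hL
  have hL2 : (1:ℝ) ≤ L^2 := by nlinarith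
  have hL4 : (1:ℝ) ≤ L^4 := by nlinarith
  have hL6 : (1:ℝ) ≤ L^6 := by nlinarith
  have hL24 : L^2 ≤ L^4 := by nlinarith [sq_nonneg L]
  have hθ0 : ∀ r : ℝ, (0:ℝ) ≤ θ r := fun r => le_trans zero_le_one (hθ1 r)
  have hBne : (β '' Set.Ici 0).Nonempty := ⟨β 0, 0, le_refl (0:ℝ), rfl⟩
  -- basic ray estimates
  have hαo : ∀ s : ℝ, 0 ≤ s → dist (α s) o ≤ L * s + θ s := by
    intro s hs
    have h := (hαd s 0 hs le_rfl).2
    rw [hα0, sub_zero, abs_of_nonneg hs, max_eq_left hs] at h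
    exact h
  have hβo : ∀ s : ℝ, 0 ≤ s → dist (β s) o ≤ L * s + θ s := by
    intro s hs
    have h := (hβd s 0 hs le_rfl).2
    rw [hβ0, sub_zero, abs_of_nonneg hs, max_eq_left hs] at h
    exact h
  have hαo' : ∀ s : ℝ, 0 ≤ s → s ≤ L * dist (α s) o + L * θ s := by
    intro s hs
    have h := (hαd s 0 hs le_rfl).1
    rw [hα0, sub_zero, abs_of_nonneg hs, max_eq_left hs] at h
    have h2 : s / L ≤ dist (α s) o + θ s := by
      rw [div_eq_inv_mul, ← one_div]; linarith
    have h3 := (div_le_iff₀ hL0).1 h2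
    linarith [h3]
  have hβo' : ∀ s : ℝ, 0 ≤ s → s ≤ L * dist (β s) o + L * θ s := by
    intro s hs
    have h := (hβd s 0 hs le_rfl).1
    rw [hβ0, sub_zero, abs_of_nonneg hs, max_eq_left hs] at h
    have h2 : s / L ≤ dist (β s) o + θ s := by
      rw [div_eq_inv_mul, ← one_div]; linarith
    have h3 := (div_le_iff₀ hL0).1 h2
    linarith [h3]
  have hβlow : ∀ s t : ℝ, 0 ≤ s → 0 ≤ t →
      |s - t| ≤ L * dist (β s) (β t) + L * θ (max s t) := by
    intro s t hs ht
    have h := (hβd s t hs ht).1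
    have h2 : |s - t| / L ≤ dist (β s) (β t) + θ (max s t) := by
      rw [div_eq_inv_mul, ← one_div]; linarith
    have h3 := (div_le_iff₀ hL0).1 h2
    linarith [h3]
  -- the key quantitative estimate
  have key : ∀ δ : ℝ, 0 < δ → δ ≤ 1 → 4 * L * δ ≤ 1 →
      ∃ T : ℝ, 1 ≤ T ∧ ∀ t : ℝ, T ≤ t →
        infDist (β t) (α '' Set.Ici 0) ≤ 34 * L^6 * δ * t := by
    intro δ hδ0 hδ1 hδL
    obtain ⟨C, hC1, hC⟩ := theta_linear_bound hθm hθ1 hθsub hδ0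
    have hC0 : (0:ℝ) ≤ C := by linarith
    obtain ⟨T₀', hT₀'⟩ := eventually_atTop.1 (htrack.eventually (gt_mem_nhds hδ0))
    set T₀ : ℝ := max T₀' 1 with hT₀def
    have hT₀1 : (1:ℝ) ≤ T₀ := le_max_right _ _
    have htrk : ∀ s : ℝ, T₀ ≤ s → infDist (α s) (β '' Set.Ici 0) ≤ δ * s := by
      intro s hs
      have h1 : (1:ℝ) ≤ s := le_trans hT₀1 hs
      have h2 := hT₀' s (le_trans (le_max_left _ _) hs)
      rw [div_lt_iff₀ (by linarith)] at h2
      linarith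
    have hch : ∀ n : ℕ, ∃ v : ℝ, 0 ≤ v ∧
        dist (α n) (β v) ≤ infDist (α n) (β '' Set.Ici 0) + 1 := by
      intro n
      have h : infDist (α n) (β '' Set.Ici 0) < infDist (α n) (β '' Set.Ici 0) + 1 := by
        linarith
      obtain ⟨y, ⟨v, hv, rfl⟩, hy⟩ := (Metric.infDist_lt_iff hBne).1 h
      exact ⟨v, hv, hy.le⟩
    choose u hu0 huD using hch
    set C₁ : ℝ := L * T₀ + C + 1 with hC₁def
    have hC₁1 : (1:ℝ) ≤ C₁ := by
      rw [hC₁def]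
      linarith [mul_nonneg hL0.le (by linarith : (0:ℝ) ≤ T₀)]
    -- distance from α(n) to β(u n)
    have hDb : ∀ n : ℕ, dist (α n) (β (u n)) ≤ δ * n + C₁ := by
      intro n
      have h0 : (0:ℝ) ≤ (n:ℝ) := Nat.cast_nonneg n
      rcases le_or_gt T₀ (n:ℝ) with h | h
      · have h1 := htrk n h
        have h2 := huD n
        linarith
      · have h1 : infDist (α ↑n) (β '' Set.Ici 0) ≤ dist (α ↑n) (β 0) :=
          infDist_le_dist_of_mem ⟨0, le_refl (0:ℝ), rfl⟩
        rw [hβ0] at h1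
        have h3 := hαo n h0
        have h4 := hC n h0
        have h5 := huD n
        have h6 : L * (n:ℝ) ≤ L * T₀ := mul_le_mul_of_nonneg_left h.le hL0.le
        linarith [hC₁def.le, hC₁def.ge]
    -- upper bound for u n
    set A : ℝ := 2 * L^2 with hAdef
    set B : ℝ := 2 * L * (C₁ + 2 * C) with hBdef
    have hA0 : (0:ℝ) ≤ A := by rw [hAdef]; positivity
    have hB0 : (0:ℝ) ≤ B := by
      rw [hBdef]
      have := mul_nonneg (by linarith : (0:ℝ) ≤ 2*L) (show (0:ℝ) ≤ C₁ + 2*C by linarith)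
      linarith
    have hub : ∀ n : ℕ, u n ≤ A * n + B := by
      intro n
      have h0 : (0:ℝ) ≤ (n:ℝ) := Nat.cast_nonneg n
      have h1 := hβo' (u n) (hu0 n)
      have h2 : dist (β (u n)) o ≤ dist (α ↑n) (β (u n)) + dist (α ↑n) o := by
        rw [dist_comm (α ↑n) (β (u n))]
        exact dist_triangle _ _ _
      have h3 := hDb n
      have h4 := hαo n h0
      have h5 := hC (u n) (hu0 n)
      have h6 := hC n h0
      have h7 : L * (δ * u n) ≤ u n / 4 := by
        nlinarith [mul_le_mul_of_nonneg_right hδL (hu0 n)]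
      have h8 : L * (δ * (n:ℝ)) ≤ (n:ℝ) / 4 := by
        nlinarith [mul_le_mul_of_nonneg_right hδL h0]
      have hL2n : (n:ℝ) ≤ L^2 * n := by
        nlinarith [mul_le_mul_of_nonneg_right hL2 h0]
      rw [hAdef, hBdef]
      linarith only [h1, h7, h8, hL2n, mul_le_mul_of_nonneg_left h2 hL0.le,
        mul_le_mul_of_nonneg_left h3 hL0.le,
        mul_le_mul_of_nonneg_left h4 hL0.le,
        mul_le_mul_of_nonneg_left h5 hL0.le,
        mul_le_mul_of_nonneg_left h6 hL0.le,
        mul_nonneg hL0.le (show (0:ℝ) ≤ C₁ by linarith),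
        mul_nonneg hL0.le hC0]
    -- lower bound for u n
    have hLL : L ≤ L^2 := by nlinarith
    have hlb : ∀ n : ℕ, T₀ ≤ (n:ℝ) → (n:ℝ) ≤ 4 * L^2 * (u n + 2 * C + 1) := by
      intro n hn
      have h0 : (0:ℝ) ≤ (n:ℝ) := Nat.cast_nonneg n
      have h1 := hαo' n h0
      have h2 : dist (α ↑n) o ≤ dist (α ↑n) (β (u n)) + dist (β (u n)) o :=
        dist_triangle _ _ _
      have h3 : dist (α ↑n) (β (u n)) ≤ δ * n + 1 := by
        have := htrk n hn
        have := huD n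
        linarith
      have h4 := hβo (u n) (hu0 n)
      have h5 := hC (u n) (hu0 n)
      have h6 := hC n h0
      have h7 : L * (δ * u n) ≤ u n / 4 := by
        nlinarith [mul_le_mul_of_nonneg_right hδL (hu0 n)]
      have h8 : L * (δ * (n:ℝ)) ≤ (n:ℝ) / 4 := by
        nlinarith [mul_le_mul_of_nonneg_right hδL h0]
      have h9 : u n ≤ L^2 * u n := by
        nlinarith [mul_le_mul_of_nonneg_right hL2 (hu0 n)]
      have h10 : L * C ≤ L^2 * C := mul_le_mul_of_nonneg_right hLL hC0
      have h11 : (0:ℝ) ≤ L^2 * u n := mul_nonneg (by positivity) (hu0 n)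
      have h12 : (0:ℝ) ≤ L^2 * C := mul_nonneg (by positivity) hC0
      linarith only [h1, h7, h8, h9, h10, h11, h12, hL2, hLL,
        mul_le_mul_of_nonneg_left h2 hL0.le,
        mul_le_mul_of_nonneg_left h3 hL0.le,
        mul_le_mul_of_nonneg_left h4 hL0.le,
        mul_le_mul_of_nonneg_left h5 hL0.le,
        mul_le_mul_of_nonneg_left h6 hL0.le]
    -- step bound
    set Sl : ℝ := L * δ * (3 + A) with hSldef
    set Sc : ℝ := L * (2 * C₁ + L + 2 * C + B) with hScdef
    have hSl0 : (0:ℝ) ≤ Sl := by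
      rw [hSldef]
      have := mul_nonneg (mul_nonneg hL0.le hδ0.le) (show (0:ℝ) ≤ 3 + A by linarith)
      linarith
    have hSc0 : (0:ℝ) ≤ Sc := by
      rw [hScdef]
      have := mul_nonneg hL0.le (show (0:ℝ) ≤ 2*C₁ + L + 2*C + B by linarith)
      linarith
    have hstep : ∀ n : ℕ, |u (n+1) - u n| ≤ Sl * ((n:ℝ)+1) + Sc := by
      intro n
      have h0 : (0:ℝ) ≤ (n:ℝ) := Nat.cast_nonneg n
      have hmaxu : max (u (n+1)) (u n) ≤ A * ((n:ℝ)+1) + B := by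
        apply max_le
        · have := hub (n+1); push_cast at this; linarith
        · have h := hub n; linarith
      have hmax0 : (0:ℝ) ≤ A * ((n:ℝ)+1) + B := by
        have := mul_nonneg hA0 (by linarith : (0:ℝ) ≤ (n:ℝ)+1)
        linarith
      have h1 := hβlow (u (n+1)) (u n) (hu0 _) (hu0 _)
      have h2 : dist (β (u (n+1))) (β (u n)) ≤
          dist (α ((n:ℝ)+1)) (β (u (n+1))) + dist (α ((n:ℝ)+1)) (α (n:ℝ))
            + dist (α (n:ℝ)) (β (u n)) := by
        calc dist (β (u (n+1))) (β (u n))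
            ≤ dist (β (u (n+1))) (α ((n:ℝ)+1)) + dist (α ((n:ℝ)+1)) (α (n:ℝ))
              + dist (α (n:ℝ)) (β (u n)) := dist_triangle4 _ _ _ _
          _ = _ := by rw [dist_comm (β (u (n+1))) (α ((n:ℝ)+1))]
      have h3 : dist (α ((n:ℝ)+1)) (β (u (n+1))) ≤ δ * ((n:ℝ)+1) + C₁ := by
        have := hDb (n+1); push_cast at this; linarith
      have h4 := hDb n
      have h5 : dist (α ((n:ℝ)+1)) (α (n:ℝ)) ≤ L + θ ((n:ℝ)+1) := by
        have h := (hαd ((n:ℝ)+1) (n:ℝ) (by linarith) h0).2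
        rw [show ((n:ℝ)+1) - n = 1 by ring, abs_one,
          max_eq_left (by linarith : (n:ℝ) ≤ (n:ℝ)+1), mul_one] at h
        exact h
      have h6 := hC ((n:ℝ)+1) (by linarith)
      have h7 : θ (max (u (n+1)) (u n)) ≤ δ * (A * ((n:ℝ)+1) + B) + C :=
        le_trans (hθm hmaxu) (hC _ hmax0)
      have h9 : δ * B ≤ B := by
        nlinarith [mul_nonneg (by linarith : (0:ℝ) ≤ 1 - δ) hB0]
      rw [hSldef, hScdef]
      linarith only [h1, mul_le_mul_of_nonneg_left h2 hL0.le,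
        mul_le_mul_of_nonneg_left h3 hL0.le,
        mul_le_mul_of_nonneg_left h4 hL0.le,
        mul_le_mul_of_nonneg_left h5 hL0.le,
        mul_le_mul_of_nonneg_left h6 hL0.le,
        mul_le_mul_of_nonneg_left h7 hL0.le,
        mul_le_mul_of_nonneg_left h9 hL0.le,
        mul_nonneg (mul_nonneg hL0.le hδ0.le) h0,
        mul_nonneg hL0.le hδ0.le]
    -- the constants for the final estimate
    set b : ℝ := 4 * L^2 * (2 * C + 1) + T₀ + 1 with hbdef
    have hb0 : (0:ℝ) ≤ b := by
      rw [hbdef]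
      have := mul_nonneg (by positivity : (0:ℝ) ≤ 4 * L^2) (by linarith : (0:ℝ) ≤ 2*C+1)
      linarith
    set K₂ : ℝ := b * (8 * L^4 * δ) + L * Sc + δ * B + C + C₁ with hK₂def
    have hK₂0 : (0:ℝ) ≤ K₂ := by
      rw [hK₂def]
      linarith [mul_nonneg hb0 (mul_nonneg (by positivity : (0:ℝ) ≤ 8 * L^4) hδ0.le),
        mul_nonneg hL0.le hSc0, mul_nonneg hδ0.le hB0]
    refine ⟨max (max (B+1) (T₀+1)) (1 + K₂/δ), ?_, ?_⟩
    · have h1 : B + 1 ≤ max (B+1) (T₀+1) := le_max_left _ _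
      have h2 : max (B+1) (T₀+1) ≤ max (max (B+1) (T₀+1)) (1 + K₂/δ) := le_max_left _ _
      linarith
    intro t ht
    have htB1 : B + 1 ≤ t := by
      have : B + 1 ≤ max (max (B+1) (T₀+1)) (1 + K₂/δ) :=
        le_trans (le_max_left _ _) (le_max_left _ _)
      linarith
    have htB : B ≤ t := by linarith
    have ht1 : (1:ℝ) ≤ t := by linarith [hB0]
    have ht0 : (0:ℝ) ≤ t := by linarith
    have htK : K₂ ≤ δ * t := by
      have h1 : 1 + K₂/δ ≤ t := le_trans (le_max_right _ _) ht
      have h2 : δ * (1 + K₂/δ) ≤ δ * t := mul_le_mul_of_nonneg_left h1 hδ0.le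
      rw [mul_add, mul_one, mul_div_cancel₀ _ hδ0.ne'] at h2
      linarith
    set N : ℕ := ⌈4 * L^2 * (t + 2*C + 1) + T₀⌉₊ with hNdef
    have hNnn : (0:ℝ) ≤ (N:ℝ) := Nat.cast_nonneg N
    have hNpos0 : (0:ℝ) ≤ 4 * L^2 * (t + 2*C + 1) + T₀ := by
      have := mul_nonneg (by positivity : (0:ℝ) ≤ 4 * L^2) (by linarith : (0:ℝ) ≤ t + 2*C+1)
      linarith
    have hN1 : 4 * L^2 * (t + 2*C + 1) + T₀ ≤ (N:ℝ) := Nat.le_ceil _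
    have hN2 : (N:ℝ) ≤ 4 * L^2 * t + b := by
      have h := Nat.ceil_lt_add_one hNpos0
      have hexp : 4 * L^2 * (t + 2*C + 1) + T₀ + 1 = 4 * L^2 * t + b := by
        rw [hbdef]; ring
      rw [← hNdef] at h
      linarith
    have hNT₀ : T₀ ≤ (N:ℝ) := by
      have := mul_nonneg (by positivity : (0:ℝ) ≤ 4 * L^2) (by linarith : (0:ℝ) ≤ t + 2*C+1)
      linarith
    have h4L : (0:ℝ) < 4 * L^2 := by positivity
    have huN : t ≤ u N := by
      have h1 := hlb N hNT₀
      nlinarith [h1, hN1, hT₀1, h4L]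
    have hex : ∃ m : ℕ, t ≤ u m := ⟨N, huN⟩
    set n := Nat.find hex with hndef
    have hnN : n ≤ N := Nat.find_le huN
    have hnNr : (n:ℝ) ≤ (N:ℝ) := Nat.cast_le.2 hnN
    have htun : t ≤ u n := Nat.find_spec hex
    have hSN : (0:ℝ) ≤ Sl * N + Sc := by
      linarith [mul_nonneg hSl0 hNnn]
    have hun_close : u n ≤ t + (Sl * N + Sc) := by
      rcases Nat.eq_zero_or_eq_succ_pred n with hn0 | hnsucc
      · have hu0B : u 0 ≤ B := by
          have h := hub 0
          push_cast at h
          linarith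
        rw [hn0]
        linarith
      · set m := n - 1 with hmdef
        have hnm : n = m + 1 := hnsucc
        have hum : u m < t := by
          have h := Nat.find_min hex (show m < n by omega)
          exact lt_of_not_ge h
        have hstepm := hstep m
        have habs : u (m+1) - u m ≤ |u (m+1) - u m| := le_abs_self _
        have hm1N : ((m:ℝ)+1) ≤ (N:ℝ) := by
          have h : m + 1 ≤ N := by omega
          exact_mod_cast h
        have hSlm : Sl * ((m:ℝ)+1) ≤ Sl * N := mul_le_mul_of_nonneg_left hm1N hSl0
        rw [hnm]
        linarith
    -- final assembly
    have hn0r : (0:ℝ) ≤ (n:ℝ) := Nat.cast_nonneg n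
    have hmem : α (n:ℝ) ∈ α '' Set.Ici 0 := ⟨(n:ℝ), hn0r, rfl⟩
    have h1 : infDist (β t) (α '' Set.Ici 0) ≤ dist (β t) (α ↑n) :=
      infDist_le_dist_of_mem hmem
    have h2 : dist (β t) (α ↑n) ≤ dist (β t) (β (u n)) + dist (α ↑n) (β (u n)) := by
      rw [dist_comm (α ↑n) (β (u n))]
      exact dist_triangle _ _ _
    have h3 : dist (β t) (β (u n)) ≤ L * |t - u n| + θ (max t (u n)) :=
      (hβd t (u n) ht0 (hu0 n)).2
    have habs : |t - u n| ≤ Sl * N + Sc := by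
      rw [abs_le]
      exact ⟨by linarith, by linarith⟩
    have hANB0 : (0:ℝ) ≤ A * N + B := by
      linarith [mul_nonneg hA0 hNnn]
    have hmaxt : max t (u n) ≤ t + (A * N + B) := by
      apply max_le
      · linarith
      · have h := hub n
        have h' : A * (n:ℝ) ≤ A * N := mul_le_mul_of_nonneg_left hnNr hA0
        linarith
    have h4 : θ (max t (u n)) ≤ δ * (t + (A * N + B)) + C :=
      le_trans (hθm hmaxt) (hC _ (by linarith))
    have h5 := hDb n
    have hδnN : δ * (n:ℝ) ≤ δ * N := mul_le_mul_of_nonneg_left hnNr hδ0.le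
    have hfin1 : infDist (β t) (α '' Set.Ici 0) ≤
        (L * Sl + δ * A + δ) * N + δ * t + (L * Sc + δ * B + C + C₁) := by
      linarith only [h1, h2, h3, h4, h5, hδnN, mul_le_mul_of_nonneg_left habs hL0.le]
    have hA1 : L * Sl + δ * A + δ ≤ 8 * L^4 * δ := by
      rw [hSldef, hAdef]
      have ha : L^2 * δ ≤ L^4 * δ := mul_le_mul_of_nonneg_right hL24 hδ0.le
      have hb : δ ≤ L^4 * δ := le_mul_of_one_le_left hδ0.le hL4
      linarith
    have hA0' : (0:ℝ) ≤ L * Sl + δ * A + δ := by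
      linarith [mul_nonneg hL0.le hSl0, mul_nonneg hδ0.le hA0]
    have hfin2 : (L * Sl + δ * A + δ) * N ≤ 8 * L^4 * δ * (4 * L^2 * t + b) :=
      mul_le_mul hA1 hN2 hNnn (mul_nonneg (by positivity : (0:ℝ) ≤ 8 * L^4) hδ0.le)
    have hfin3 : infDist (β t) (α '' Set.Ici 0) ≤ 32 * L^6 * δ * t + δ * t + K₂ := by
      rw [hK₂def]
      linarith only [hfin1, hfin2]
    have hδt : δ * t ≤ L^6 * (δ * t) :=
      le_mul_of_one_le_left (mul_nonneg hδ0.le ht0) hL6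
    linarith only [hfin3, htK, hδt]
  -- deduce the limit from the key estimate
  have main : ∀ ε : ℝ, 0 < ε → ∃ T : ℝ, 1 ≤ T ∧ ∀ t : ℝ, T ≤ t →
      infDist (β t) (α '' Set.Ici 0) ≤ ε * t := by
    intro ε hε
    have h34 : (0:ℝ) < 34 * L^6 := by positivity
    have h4L : (0:ℝ) < 4 * L := by positivity
    set δ : ℝ := min (ε / (34 * L^6)) (1 / (4*L)) with hδdef
    have hδ0 : 0 < δ := lt_min (by positivity) (by positivity)
    have hδhalf : δ ≤ 1 / (4*L) := min_le_right _ _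
    have hδ1 : δ ≤ 1 := by
      have : 1 / (4*L) ≤ 1 := by
        rw [div_le_one h4L]; linarith
      linarith
    have hδL : 4 * L * δ ≤ 1 := by
      have h := mul_le_mul_of_nonneg_left hδhalf h4L.le
      rw [mul_one_div_cancel h4L.ne'] at h
      exact h
    obtain ⟨T, hT1, hT⟩ := key δ hδ0 hδ1 hδL
    refine ⟨T, hT1, fun t ht => ?_⟩
    have ht0 : (0:ℝ) ≤ t := by linarith
    have h1 := hT t ht
    have h2 : 34 * L^6 * δ ≤ ε := by
      have h := mul_le_mul_of_nonneg_left (min_le_left (ε / (34 * L^6)) (1/(4*L))) h34.le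
      rw [mul_div_cancel₀ _ h34.ne'] at h
      exact h
    calc infDist (β t) (α '' Set.Ici 0) ≤ 34 * L^6 * δ * t := h1
      _ ≤ ε * t := mul_le_mul_of_nonneg_right h2 ht0
  -- conclude
  rw [Metric.tendsto_nhds]
  intro ε hε
  obtain ⟨T, hT1, hT⟩ := main (ε/2) (by positivity)
  filter_upwards [Filter.eventually_ge_atTop (max T 1)] with t ht
  have ht1 : (1:ℝ) ≤ t := le_trans (le_max_right _ _) ht
  have htpos : (0:ℝ) < t := by linarith
  have htT : T ≤ t := le_trans (le_max_left _ _) ht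
  have h1 := hT t htT
  have h0 : 0 ≤ infDist (β t) (α '' Set.Ici 0) := infDist_nonneg
  rw [Real.dist_eq, sub_zero, abs_of_nonneg (div_nonneg h0 htpos.le)]
  rw [div_lt_iff₀ htpos]
  have h2 : (0:ℝ) < ε * t := mul_pos hε htpos
  linarith
end

section
/- Let Φ : X → Y be an (L,θ)-sublinear biLipschitz equivalence between proper geodesic pointed metric spaces. Then there exists a map Φ̄ : Y → X which is an (L',θ')-sublinear biLipschitz equivalence for some constant L' and function θ' = O(θ), and a constant n > 0 such that d(x, Φ̄(Φ(x))) ≤ n·θ(‖x‖) for all x ∈ X and d(y, Φ(Φ̄(y))) ≤ n·θ(‖y‖) for all y ∈ Y. -/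
open Metric Set Filter

/-- `Φ` is an `(L,θ)`-sublinear biLipschitz equivalence between the pointed
metric spaces `(X, oX)` and `(Y, oY)`. -/
def IsSBE {X Y : Type*} [MetricSpace X] [MetricSpace Y] (oX : X) (oY : Y)
    (L : ℝ) (θ : ℝ → ℝ) (Φ : X → Y) : Prop :=
  (∀ x₁ x₂ : X,
    (1 / L) * dist x₁ x₂ - θ (max (dist x₁ oX) (dist x₂ oX)) ≤ dist (Φ x₁) (Φ x₂) ∧
    dist (Φ x₁) (Φ x₂) ≤ L * dist x₁ x₂ + θ (max (dist x₁ oX) (dist x₂ oX))) ∧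
  ∃ D ≥ (0:ℝ), ∀ y : Y, infDist y (Set.range Φ) ≤ D * θ (dist y oY)

set_option maxHeartbeats 2000000 in
/-- Every `(L,θ)`-SBE admits a coarse inverse which is itself an `(L',θ')`-SBE
with `θ' = O(θ)`, and which inverts `Φ` up to error `O(θ)`. -/
theorem sbe_inverse
    {X Y : Type*} [MetricSpace X] [MetricSpace Y] [ProperSpace X] [ProperSpace Y]
    (hgX : IsGeodesicSpace X) (hgY : IsGeodesicSpace Y)
    (oX : X) (oY : Y) (L : ℝ) (hL : 1 ≤ L)
    (θ : ℝ → ℝ) (hθc : ConcaveOn ℝ (Set.Ici 0) θ) (hθm : Monotone θ)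
    (hθ1 : ∀ r : ℝ, 1 ≤ θ r)
    (hθsub : Tendsto (fun r => θ r / r) atTop (nhds 0))
    (Φ : X → Y) (hΦ : IsSBE oX oY L θ Φ) :
    ∃ (Ψ : Y → X) (L' C n : ℝ) (θ' : ℝ → ℝ),
      0 < n ∧ 0 < C ∧ 1 ≤ L' ∧
      (∀ t : ℝ, 0 ≤ t → θ' t ≤ C * θ t) ∧
      IsSBE oY oX L' θ' Ψ ∧
      (∀ x : X, dist x (Ψ (Φ x)) ≤ n * θ (dist x oX)) ∧
      (∀ y : Y, dist y (Φ (Ψ y)) ≤ n * θ (dist y oY)) := by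
  obtain ⟨hpair, D, hD0, hD⟩ := hΦ
  have hL0 : (0:ℝ) < L := lt_of_lt_of_le one_pos hL
  have hθ0 : ∀ r, (0:ℝ) < θ r := fun r => lt_of_lt_of_le one_pos (hθ1 r)
  -- concavity gives sub-multiplicativity under scaling
  have hscale : ∀ c r : ℝ, 1 ≤ c → 0 ≤ r → θ (c * r) ≤ c * θ r := by
    intro c r hc hr
    have hc0 : (0:ℝ) < c := lt_of_lt_of_le one_pos hc
    have h1c : (0:ℝ) ≤ 1 - 1/c := by
      have : 1/c ≤ 1 := by rw [div_le_one hc0]; exact hc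
      linarith
    have hmem1 : c * r ∈ Set.Ici (0:ℝ) := Set.mem_Ici.mpr (by positivity)
    have hmem2 : (0:ℝ) ∈ Set.Ici (0:ℝ) := Set.mem_Ici.mpr le_rfl
    have hsum : (1/c) + (1 - 1/c) = 1 := by ring
    have hcv := hθc.2 hmem1 hmem2 (by positivity) h1c hsum
    simp only [smul_eq_mul, mul_zero, add_zero] at hcv
    rw [show (1/c) * (c*r) = r by field_simp] at hcv
    have hθ00 : (0:ℝ) ≤ θ 0 := (hθ0 0).le
    have h2 : 1/c * θ (c*r) ≤ θ r := by nlinarith [mul_nonneg h1c hθ00]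
    have h3 : θ (c*r) / c ≤ θ r := by rw [div_eq_inv_mul, ← one_div]; exact h2
    have := (div_le_iff₀ hc0).mp h3
    linarith [this, mul_comm (θ r) c]
  -- key consequence: θ (A r + B) ≤ K θ r
  have hG : ∀ A B : ℝ, 0 ≤ A → 0 ≤ B →
      ∃ K : ℝ, 1 ≤ K ∧ ∀ r, 0 ≤ r → θ (A * r + B) ≤ K * θ r := by
    intro A B hA hB
    refine ⟨max (max (A+B) 1) (θ (A+B)),
      le_trans (le_max_right _ _) (le_max_left _ _), ?_⟩
    intro r hr
    have hK0 : (0:ℝ) ≤ max (max (A+B) 1) (θ (A+B)) :=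
      le_trans zero_le_one (le_trans (le_max_right _ _) (le_max_left _ _))
    rcases le_or_gt 1 r with h1 | h1
    · have hBr : B ≤ B * r := le_mul_of_one_le_right hB h1
      have h2 : A * r + B ≤ (max (A+B) 1) * r := by
        have h3 : A + B ≤ max (A+B) 1 := le_max_left _ _
        nlinarith
      calc θ (A*r+B) ≤ θ ((max (A+B) 1) * r) := hθm h2
        _ ≤ (max (A+B) 1) * θ r := hscale _ _ (le_max_right _ _) hr
        _ ≤ _ := mul_le_mul_of_nonneg_right (le_max_left _ _) (hθ0 r).le
    · have h2 : A * r + B ≤ A + B := by nlinarith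
      calc θ (A*r+B) ≤ θ (A+B) := hθm h2
        _ = θ (A+B) * 1 := (mul_one _).symm
        _ ≤ max (max (A+B) 1) (θ (A+B)) * θ r :=
            mul_le_mul (le_max_right _ _) (hθ1 r) zero_le_one hK0
  -- sublinearity threshold
  obtain ⟨r₀, hr₀1, hr₀⟩ : ∃ r₀ : ℝ, 1 ≤ r₀ ∧ ∀ r, r₀ ≤ r → θ r ≤ r / (2*L) := by
    have hpos : (0:ℝ) < 1/(2*L) := by positivity
    have hev : ∀ᶠ r in atTop, θ r / r < 1/(2*L) := hθsub.eventually (gt_mem_nhds hpos)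
    obtain ⟨a, ha⟩ := eventually_atTop.mp hev
    refine ⟨max a 1, le_max_right _ _, fun r hr => ?_⟩
    have hr1 : (1:ℝ) ≤ r := le_trans (le_max_right _ _) hr
    have hrpos : (0:ℝ) < r := lt_of_lt_of_le one_pos hr1
    have := ha r (le_trans (le_max_left _ _) hr)
    have h2 : θ r < 1/(2*L) * r := (div_lt_iff₀ hrpos).mp this
    have h3 : 1/(2*L) * r = r / (2*L) := by ring
    linarith
  have hr₀0 : (0:ℝ) ≤ r₀ := le_trans zero_le_one hr₀1
  have hθlin : ∀ r : ℝ, 0 ≤ r → θ r ≤ r + θ r₀ := by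
    intro r hr
    rcases le_or_gt r₀ r with h | h
    · have h1 := hr₀ r h
      have h2 : r / (2*L) ≤ r := by
        apply div_le_self hr; linarith
      linarith [hθ0 r₀]
    · exact le_trans (hθm h.le) (by linarith)
  -- construct the coarse inverse
  obtain ⟨E, hEdef⟩ : ∃ E : ℝ, E = D + 1 := ⟨_, rfl⟩
  have hE1 : (1:ℝ) ≤ E := by rw [hEdef]; linarith
  have hΨex : ∀ y : Y, ∃ x : X, dist (Φ x) y ≤ E * θ (dist y oY) := by
    intro y
    have hne : (Set.range Φ).Nonempty := ⟨Φ oX, Set.mem_range_self _⟩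
    have hlt : infDist y (Set.range Φ) < E * θ (dist y oY) := by
      have h1 := hD y
      rw [hEdef]
      have h2 : (D+1) * θ (dist y oY) = D * θ (dist y oY) + θ (dist y oY) := by ring
      linarith [hθ0 (dist y oY)]
    obtain ⟨z, hz, hzd⟩ := (infDist_lt_iff hne).mp hlt
    obtain ⟨x, rfl⟩ := hz
    exact ⟨x, by rw [dist_comm]; exact hzd.le⟩
  choose Ψ hΨ using hΨex
  -- lower bound on growth of Φ
  have hK1 : ∀ x : X, dist x oX ≤ 2*L*dist (Φ x) (Φ oX) + r₀ := by
    intro x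
    rcases le_or_gt (dist x oX) r₀ with h | h
    · nlinarith [dist_nonneg (x := Φ x) (y := Φ oX)]
    · have hlow := (hpair x oX).1
      rw [dist_self, max_eq_left dist_nonneg] at hlow
      have hθx : θ (dist x oX) ≤ dist x oX / (2*L) := hr₀ _ h.le
      have h2 : dist x oX / (2*L) ≤ dist (Φ x) (Φ oX) := by
        have heq : (1/L) * dist x oX - dist x oX/(2*L) = dist x oX/(2*L) := by
          field_simp; ring
        linarith
      have h3 : dist x oX = 2*L * (dist x oX/(2*L)) := by field_simp
      nlinarith
  -- growth of Φ
  obtain ⟨B₁, hB₁def⟩ : ∃ B : ℝ, B = θ r₀ + dist (Φ oX) oY := ⟨_, rfl⟩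
  have hB₁0 : (0:ℝ) ≤ B₁ := hB₁def ▸ add_nonneg (hθ0 r₀).le dist_nonneg
  have hΦnorm : ∀ x : X, dist (Φ x) oY ≤ (L+1) * dist x oX + B₁ := by
    intro x
    have hup := (hpair x oX).2
    rw [dist_self, max_eq_left dist_nonneg] at hup
    have h1 := hθlin (dist x oX) dist_nonneg
    have h2 := dist_triangle (Φ x) (Φ oX) oY
    rw [hB₁def]; linarith
  -- growth of Ψ
  obtain ⟨A₂, hA₂def⟩ : ∃ A : ℝ, A = 2*L*(E+1) := ⟨_, rfl⟩
  obtain ⟨B₂, hB₂def⟩ : ∃ B : ℝ, B = 2*L*(E*θ r₀ + dist (Φ oX) oY) + r₀ := ⟨_, rfl⟩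
  have hA₂0 : (0:ℝ) ≤ A₂ := by rw [hA₂def]; nlinarith
  have hB₂0 : (0:ℝ) ≤ B₂ := by
    have hE0 : (0:ℝ) ≤ E := by linarith
    have h1 : (0:ℝ) ≤ E * θ r₀ + dist (Φ oX) oY :=
      add_nonneg (mul_nonneg hE0 (hθ0 r₀).le) dist_nonneg
    have h2 : (0:ℝ) ≤ 2*L*(E*θ r₀ + dist (Φ oX) oY) := mul_nonneg (by linarith) h1
    rw [hB₂def]
    linarith
  have hΨnorm : ∀ y : Y, dist (Ψ y) oX ≤ A₂ * dist y oY + B₂ := by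
    intro y
    have h1 := hK1 (Ψ y)
    have h2 : dist (Φ (Ψ y)) (Φ oX) ≤ (E+1) * dist y oY + (E * θ r₀ + dist (Φ oX) oY) := by
      have ht := dist_triangle (Φ (Ψ y)) y oY
      have ht2 := dist_triangle (Φ (Ψ y)) oY (Φ oX)
      have hΨy := hΨ y
      have hθy := hθlin (dist y oY) dist_nonneg
      have hE0 : (0:ℝ) ≤ E := by linarith
      have h3 : E * θ (dist y oY) ≤ E * dist y oY + E * θ r₀ :=
        by nlinarith
      have h4 : dist oY (Φ oX) = dist (Φ oX) oY := dist_comm _ _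
      linarith [dist_triangle (Φ (Ψ y)) y (Φ oX), dist_triangle y oY (Φ oX)]
    have h5 : 2*L*dist (Φ (Ψ y)) (Φ oX) ≤
        2*L*((E+1) * dist y oY + (E * θ r₀ + dist (Φ oX) oY)) := by nlinarith
    rw [hA₂def, hB₂def]
    nlinarith
  -- constants from hG
  obtain ⟨K₁, hK₁1, hK₁b⟩ := hG (L+1) B₁ (by linarith) hB₁0
  obtain ⟨K₂, hK₂1, hK₂b⟩ := hG A₂ B₂ hA₂0 hB₂0
  obtain ⟨K₃, hK₃1, hK₃b⟩ := hG (A₂*(L+1)+1) (A₂*B₁+B₂)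
    (by nlinarith) (by nlinarith)
  have hθΦ : ∀ x : X, θ (dist (Φ x) oY) ≤ K₁ * θ (dist x oX) := fun x =>
    le_trans (hθm (hΦnorm x)) (hK₁b _ dist_nonneg)
  have hθΨmax : ∀ y₁ y₂ : Y,
      θ (max (dist (Ψ y₁) oX) (dist (Ψ y₂) oX)) ≤
        K₂ * θ (max (dist y₁ oY) (dist y₂ oY)) := by
    intro y₁ y₂
    have h1 : max (dist (Ψ y₁) oX) (dist (Ψ y₂) oX) ≤
        A₂ * max (dist y₁ oY) (dist y₂ oY) + B₂ := by
      apply max_le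
      · exact le_trans (hΨnorm y₁) (by nlinarith [le_max_left (dist y₁ oY) (dist y₂ oY)])
      · exact le_trans (hΨnorm y₂) (by nlinarith [le_max_right (dist y₁ oY) (dist y₂ oY)])
    exact le_trans (hθm h1)
      (hK₂b _ (le_trans dist_nonneg (le_max_left _ _)))
  -- left inverse estimate
  have hleft : ∀ x : X, dist x (Ψ (Φ x)) ≤ (L*(E*K₁ + K₃)) * θ (dist x oX) := by
    intro x
    have hd : dist (Φ x) (Φ (Ψ (Φ x))) ≤ E * K₁ * θ (dist x oX) := by
      rw [dist_comm]
      calc dist (Φ (Ψ (Φ x))) (Φ x) ≤ E * θ (dist (Φ x) oY) := hΨ (Φ x)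
        _ ≤ E * (K₁ * θ (dist x oX)) :=
            mul_le_mul_of_nonneg_left (hθΦ x) (by linarith)
        _ = E * K₁ * θ (dist x oX) := by ring
    have hmax : max (dist x oX) (dist (Ψ (Φ x)) oX) ≤
        (A₂*(L+1)+1) * dist x oX + (A₂*B₁+B₂) := by
      apply max_le
      · have c1 : (0:ℝ) ≤ A₂*(L+1) * dist x oX :=
          mul_nonneg (mul_nonneg hA₂0 (by linarith)) dist_nonneg
        have c2 : (0:ℝ) ≤ A₂*B₁ := mul_nonneg hA₂0 hB₁0
        linarith
      · calc dist (Ψ (Φ x)) oX ≤ A₂ * dist (Φ x) oY + B₂ := hΨnorm _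
          _ ≤ A₂ * ((L+1)*dist x oX + B₁) + B₂ := by
              have := mul_le_mul_of_nonneg_left (hΦnorm x) hA₂0
              linarith
          _ ≤ (A₂*(L+1)+1) * dist x oX + (A₂*B₁+B₂) := by
              have he : A₂ * ((L+1)*dist x oX + B₁) + B₂ =
                  (A₂*(L+1)) * dist x oX + (A₂*B₁+B₂) := by ring
              linarith [dist_nonneg (x := x) (y := oX)]
    have hθmax : θ (max (dist x oX) (dist (Ψ (Φ x)) oX)) ≤ K₃ * θ (dist x oX) :=
      le_trans (hθm hmax) (hK₃b _ dist_nonneg)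
    have hlow := (hpair x (Ψ (Φ x))).1
    have h5 : (1/L) * dist x (Ψ (Φ x)) ≤
        E*K₁*θ (dist x oX) + K₃ * θ (dist x oX) := by linarith
    have h6 := mul_le_mul_of_nonneg_left h5 hL0.le
    rw [show L * ((1/L) * dist x (Ψ (Φ x))) = dist x (Ψ (Φ x)) from by field_simp] at h6
    have h7 : L * (E*K₁*θ (dist x oX) + K₃ * θ (dist x oX)) =
        (L*(E*K₁ + K₃)) * θ (dist x oX) := by ring
    linarith
  -- put everything together
  obtain ⟨N, hNdef⟩ : ∃ N : ℝ, N = L*(2*E + K₂) := ⟨_, rfl⟩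
  have hN1 : (1:ℝ) ≤ N := by
    have h1 : L * 1 ≤ L * (2*E + K₂) :=
      mul_le_mul_of_nonneg_left (by linarith) (by linarith)
    rw [hNdef]; linarith
  obtain ⟨n, hndef⟩ : ∃ n : ℝ, n = L*(E*K₁ + K₃) + E := ⟨_, rfl⟩
  have hEK₁ : (0:ℝ) ≤ E*K₁ := mul_nonneg (by linarith) (by linarith)
  have hLEK : (0:ℝ) ≤ L*(E*K₁ + K₃) := mul_nonneg (by linarith) (by linarith)
  have hn0 : (0:ℝ) < n := by rw [hndef]; linarith
  have hLn : L*(E*K₁ + K₃) ≤ n := by rw [hndef]; linarith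
  have hEn : E ≤ n := by rw [hndef]; linarith
  refine ⟨Ψ, L, N, n, fun t => N * θ t, hn0, by linarith, hL,
    fun t _ => le_rfl, ⟨?_, n, hn0.le, ?_⟩, ?_, ?_⟩
  · -- SBE bounds for Ψ
    intro y₁ y₂
    have hΨ1 := hΨ y₁
    have hΨ2 := hΨ y₂
    have hE0 : (0:ℝ) ≤ E := by linarith
    obtain ⟨M, hMdef⟩ : ∃ M : ℝ, M = θ (max (dist y₁ oY) (dist y₂ oY)) := ⟨_, rfl⟩
    have hM0 : (0:ℝ) < M := hMdef ▸ hθ0 _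
    have hEy1 : E * θ (dist y₁ oY) ≤ E * M :=
      hMdef ▸ mul_le_mul_of_nonneg_left (hθm (le_max_left _ _)) hE0
    have hEy2 : E * θ (dist y₂ oY) ≤ E * M :=
      hMdef ▸ mul_le_mul_of_nonneg_left (hθm (le_max_right _ _)) hE0
    have hθM : θ (max (dist (Ψ y₁) oX) (dist (Ψ y₂) oX)) ≤ K₂ * M := hMdef ▸ hθΨmax y₁ y₂
    have hLN : (2*E + K₂) * M ≤ L * N * M := by
      have h11 : (1:ℝ) ≤ L*L := by
        have := mul_le_mul hL hL zero_le_one (by linarith : (0:ℝ) ≤ L); linarith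
      have h12 : 1*(2*E+K₂) ≤ (L*L)*(2*E+K₂) :=
        mul_le_mul_of_nonneg_right h11 (by linarith)
      have h13 : (L*L)*(2*E+K₂) = L * N := by rw [hNdef]; ring
      have h14 : (2*E+K₂) ≤ L * N := by linarith
      exact mul_le_mul_of_nonneg_right h14 hM0.le
    constructor
    · -- lower bound
      show (1/L) * dist y₁ y₂ - N * θ (max (dist y₁ oY) (dist y₂ oY)) ≤ dist (Ψ y₁) (Ψ y₂)
      rw [← hMdef]
      have hup := (hpair (Ψ y₁) (Ψ y₂)).2
      have htri : dist y₁ y₂ ≤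
          dist (Φ (Ψ y₁)) y₁ + dist (Φ (Ψ y₁)) (Φ (Ψ y₂)) + dist (Φ (Ψ y₂)) y₂ := by
        have t1 := dist_triangle y₁ (Φ (Ψ y₁)) y₂
        have t2 := dist_triangle (Φ (Ψ y₁)) (Φ (Ψ y₂)) y₂
        have e1 : dist y₁ (Φ (Ψ y₁)) = dist (Φ (Ψ y₁)) y₁ := dist_comm _ _
        have e2 : dist (Φ (Ψ y₂)) y₂ = dist y₂ (Φ (Ψ y₂)) := dist_comm _ _
        rw [e2]; linarith
      have hkey : dist y₁ y₂ ≤ L * dist (Ψ y₁) (Ψ y₂) + (2*E + K₂) * M := by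
        have hr : (2*E + K₂) * M = E*M + E*M + K₂*M := by ring
        linarith
      have hkey2 : dist y₁ y₂ ≤ L * dist (Ψ y₁) (Ψ y₂) + L * N * M := by linarith
      have h8 := mul_le_mul_of_nonneg_left hkey2 (by positivity : (0:ℝ) ≤ 1/L)
      rw [show (1/L) * (L * dist (Ψ y₁) (Ψ y₂) + L * N * M) =
          dist (Ψ y₁) (Ψ y₂) + N * M from by field_simp] at h8
      linarith
    · -- upper bound
      show dist (Ψ y₁) (Ψ y₂) ≤ L * dist y₁ y₂ + N * θ (max (dist y₁ oY) (dist y₂ oY))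
      rw [← hMdef]
      have hlow := (hpair (Ψ y₁) (Ψ y₂)).1
      have htri : dist (Φ (Ψ y₁)) (Φ (Ψ y₂)) ≤
          dist (Φ (Ψ y₁)) y₁ + dist y₁ y₂ + dist y₂ (Φ (Ψ y₂)) :=
        dist_triangle4 _ _ _ _
      have e2 : dist y₂ (Φ (Ψ y₂)) = dist (Φ (Ψ y₂)) y₂ := dist_comm _ _
      have h5 : (1/L) * dist (Ψ y₁) (Ψ y₂) ≤ dist y₁ y₂ + (2*E + K₂) * M := by
        rw [e2] at htri
        have hr : (2*E + K₂) * M = E*M + E*M + K₂*M := by ring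
        linarith
      have h6 := mul_le_mul_of_nonneg_left h5 hL0.le
      rw [show L * ((1/L) * dist (Ψ y₁) (Ψ y₂)) = dist (Ψ y₁) (Ψ y₂) from by
        field_simp] at h6
      have h7 : L * (dist y₁ y₂ + (2*E + K₂) * M) = L * dist y₁ y₂ + L * ((2*E+K₂)*M) := by
        ring
      have h9 : L * ((2*E+K₂)*M) = N * M := by rw [hNdef]; ring
      linarith
  · -- density of range Ψ
    intro x
    show infDist x (Set.range Ψ) ≤ n * (N * θ (dist x oX))
    have h1 : infDist x (Set.range Ψ) ≤ dist x (Ψ (Φ x)) :=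
      infDist_le_dist_of_mem (Set.mem_range_self _)
    have h2 := hleft x
    have hθx := (hθ0 (dist x oX)).le
    have h3 : n * θ (dist x oX) ≤ n * (N * θ (dist x oX)) :=
      mul_le_mul_of_nonneg_left (le_mul_of_one_le_left hθx hN1) hn0.le
    have h4 : (L*(E*K₁ + K₃)) * θ (dist x oX) ≤ n * θ (dist x oX) :=
      mul_le_mul_of_nonneg_right hLn hθx
    linarith
  · -- left inverse
    intro x
    have h2 := hleft x
    have h4 : (L*(E*K₁ + K₃)) * θ (dist x oX) ≤ n * θ (dist x oX) :=
      mul_le_mul_of_nonneg_right hLn (hθ0 _).le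
    linarith
  · -- right inverse
    intro y
    have h1 := hΨ y
    rw [dist_comm]
    have h4 : E * θ (dist y oY) ≤ n * θ (dist y oY) :=
      mul_le_mul_of_nonneg_right hEn (hθ0 _).le
    linarith
end

section
/- Let κ dominate θ (i.e., κ(t) ≥ C₁θ(t) + C₂ for large t). Let α and α' be (L,θ)-rays in a proper geodesic space X that κ-fellow travel each other (there exists n with d(α(t), α'(t)) ≤ n·κ(t) for all t). If α is κ-Morse, then α' is (2κ+θ)-Morse; in particular if κ dominates θ then α' is κ'-Morse for κ' = 2κ+θ which is comparable to κ. -/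
open Metric Set Filter

/-- `β` is a `(q,Q)`-quasigeodesic ray based at `o`. -/
def IsQGRay {X : Type*} [MetricSpace X] (o : X) (q Q : ℝ) (β : ℝ → X) : Prop :=
  β 0 = o ∧ ∀ s t : ℝ, 0 ≤ s → 0 ≤ t →
    (1 / q) * |s - t| - Q ≤ dist (β s) (β t) ∧
    dist (β s) (β t) ≤ q * |s - t| + Q

/-- `Z` is `κ`-Morse with Morse gauge `m`: every quasigeodesic ray sublinearly
tracking `Z` lies in the `κ`-neighborhood of `Z` of gauge `m`. -/
def MorseGauge {X : Type*} [MetricSpace X] (o : X) (κ : ℝ → ℝ) (Z : Set X)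
    (m : ℝ → ℝ → ℝ) : Prop :=
  ∀ q Q : ℝ, ∀ β : ℝ → X, IsQGRay o q Q β →
    Tendsto (fun t => infDist (β t) Z / t) atTop (nhds 0) →
    ∀ t : ℝ, 0 ≤ t → infDist (β t) Z ≤ m q Q * κ (dist (β t) o)

/-- `Z` is `κ`-Morse. -/
def IsMorse {X : Type*} [MetricSpace X] (o : X) (κ : ℝ → ℝ) (Z : Set X) : Prop :=
  ∃ m : ℝ → ℝ → ℝ, MorseGauge o κ Z m

/-- `κ` dominates `θ`. -/
def Dominates (κ θ : ℝ → ℝ) : Prop :=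
  ∃ C₁ > (0:ℝ), ∃ C₂ t₀ : ℝ, ∀ t : ℝ, t₀ < t → C₁ * θ t + C₂ ≤ κ t

lemma concave_scale {κ : ℝ → ℝ} (hκc : ConcaveOn ℝ (Set.Ici 0) κ) (hκ0 : 0 ≤ κ 0)
    {a x : ℝ} (ha : 1 ≤ a) (hx : 0 ≤ x) : κ (a * x) ≤ a * κ x := by
  have ha0 : (0:ℝ) < a := lt_of_lt_of_le one_pos ha
  have hmem : a * x ∈ Set.Ici (0:ℝ) := Set.mem_Ici.mpr (mul_nonneg ha0.le hx)
  have h0mem : (0:ℝ) ∈ Set.Ici (0:ℝ) := Set.mem_Ici.mpr le_rfl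
  have hw1 : (0:ℝ) ≤ 1/a := by positivity
  have hw2 : (0:ℝ) ≤ 1 - 1/a := by
    have : 1/a ≤ 1 := by rw [div_le_one ha0]; exact ha
    linarith
  have hsum : 1/a + (1 - 1/a) = 1 := by ring
  have key := hκc.2 hmem h0mem hw1 hw2 hsum
  simp only [smul_eq_mul, mul_zero, add_zero] at key
  have hx' : (1/a) * (a*x) = x := by field_simp
  rw [hx'] at key
  have k2 := mul_le_mul_of_nonneg_left key ha0.le
  have e1 : a * (1/a * κ (a*x) + (1-1/a)*κ 0) = κ (a*x) + (a-1) * κ 0 := by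
    field_simp
  rw [e1] at k2
  nlinarith

lemma kappa_le_affine {κ : ℝ → ℝ} (hκc : ConcaveOn ℝ (Set.Ici 0) κ) (hκm : Monotone κ)
    (hκ1 : ∀ r, 1 ≤ κ r) {d : ℝ} (hd : 0 ≤ d) : κ d ≤ κ 1 * (d + 1) := by
  have h0 : (0:ℝ) ≤ κ 0 := le_trans zero_le_one (hκ1 0)
  have h1 : (1:ℝ) ≤ κ 1 := hκ1 1
  rcases le_or_gt 1 d with h | h
  · have h2 : κ (d * 1) ≤ d * κ 1 := concave_scale hκc h0 h zero_le_one
    rw [mul_one] at h2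
    nlinarith
  · have : κ d ≤ κ 1 := hκm h.le
    nlinarith

lemma kappa_affine_bound {κ : ℝ → ℝ} (hκc : ConcaveOn ℝ (Set.Ici 0) κ) (hκm : Monotone κ)
    (hκ1 : ∀ r, 1 ≤ κ r) {a b d : ℝ} (ha : 1 ≤ a) (hb : 0 ≤ b) (hd : 0 ≤ d) :
    κ (a * d + b) ≤ (a + b) * κ 1 * κ d := by
  have h0 : (0:ℝ) ≤ κ 0 := le_trans zero_le_one (hκ1 0)
  have h11 : (1:ℝ) ≤ κ 1 := hκ1 1
  have hd1 : (1:ℝ) ≤ κ d := hκ1 d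
  have hab : 1 ≤ a + b := by linarith
  have hmax : (0:ℝ) ≤ max d 1 := le_trans zero_le_one (le_max_right d 1)
  have h1 : a * d + b ≤ (a + b) * max d 1 := by
    rcases le_or_gt 1 d with h | h
    · rw [max_eq_left h]; nlinarith
    · rw [max_eq_right h.le]; nlinarith
  have h2 : κ (a * d + b) ≤ κ ((a+b) * max d 1) := hκm h1
  have h3 : κ ((a+b) * max d 1) ≤ (a+b) * κ (max d 1) := concave_scale hκc h0 hab hmax
  have h4 : κ (max d 1) ≤ κ 1 * κ d := by
    rcases le_or_gt 1 d with h | h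
    · rw [max_eq_left h]; nlinarith
    · rw [max_eq_right h.le]; nlinarith [hκ1 d]
  nlinarith [hκ1 (max d 1)]

lemma sublin_threshold {θ : ℝ → ℝ} (hθsub : Tendsto (fun r => θ r / r) atTop (nhds 0))
    {c : ℝ} (hc : 0 < c) : ∃ s₀ : ℝ, 1 ≤ s₀ ∧ ∀ s, s₀ ≤ s → θ s ≤ c * s := by
  have hev : ∀ᶠ r in atTop, θ r / r < c := hθsub.eventually_lt_const hc
  obtain ⟨a, ha⟩ := eventually_atTop.mp hev
  refine ⟨max a 1, le_max_right _ _, fun s hs => ?_⟩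
  have hs1 : (1:ℝ) ≤ s := le_trans (le_max_right a 1) hs
  have hs0 : (0:ℝ) < s := lt_of_lt_of_le one_pos hs1
  have := ha s (le_trans (le_max_left a 1) hs)
  rw [div_lt_iff₀ hs0] at this
  linarith

lemma ray_param {X : Type*} [MetricSpace X] {o : X} {L : ℝ} {θ : ℝ → ℝ} {γ : ℝ → X}
    (hL : 1 ≤ L) (hγ : IsRay o L θ γ) {s₀ : ℝ} (hs₀1 : 1 ≤ s₀)
    (hθb : ∀ s, s₀ ≤ s → θ s ≤ (1/(2*L)) * s) :
    ∀ s, 0 ≤ s → s ≤ 2 * L * dist (γ s) o + s₀ := by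
  intro s hs
  have hL0 : (0:ℝ) < L := lt_of_lt_of_le one_pos hL
  rcases le_or_gt s s₀ with h | h
  · nlinarith [dist_nonneg (x := γ s) (y := o)]
  · have key := (hγ.2 s 0 hs le_rfl).1
    rw [hγ.1] at key
    rw [sub_zero, abs_of_nonneg hs, max_eq_left hs] at key
    have hθ := hθb s h.le
    have hlow : (1/(2*L)) * s ≤ dist (γ s) o := by
      have hrw : (1/L) * s - (1/(2*L)) * s = (1/(2*L)) * s := by field_simp; ring
      linarith
    have := mul_le_mul_of_nonneg_left hlow (by positivity : (0:ℝ) ≤ 2*L)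
    have e : 2*L*((1/(2*L))*s) = s := by field_simp
    nlinarith

set_option maxHeartbeats 1000000 in
/-- If `α` and `α'` are `κ`-fellow travelling `(L,θ)`-rays and `α` is `κ`-Morse,
then `α'` is `(2κ+θ)`-Morse. -/
theorem fellow_travel_morse
    {X : Type*} [MetricSpace X] [ProperSpace X]
    (o : X) (L : ℝ) (hL : 1 ≤ L)
    (κ θ : ℝ → ℝ)
    (hκc : ConcaveOn ℝ (Set.Ici 0) κ) (hκm : Monotone κ) (hκ1 : ∀ r : ℝ, 1 ≤ κ r)
    (hκsub : Tendsto (fun r => κ r / r) atTop (nhds 0))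
    (hθc : ConcaveOn ℝ (Set.Ici 0) θ) (hθm : Monotone θ) (hθ1 : ∀ r : ℝ, 1 ≤ θ r)
    (hθsub : Tendsto (fun r => θ r / r) atTop (nhds 0))
    (hdom : Dominates κ θ)
    (α α' : ℝ → X) (hα : IsRay o L θ α) (hα' : IsRay o L θ α')
    (n : ℝ) (hn : 0 < n)
    (hft : ∀ t : ℝ, 0 ≤ t → dist (α t) (α' t) ≤ n * κ t)
    (hmorse : IsMorse o κ (α '' Set.Ici 0)) :
    IsMorse o (fun t => 2 * κ t + θ t) (α' '' Set.Ici 0) := by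
  obtain ⟨m, hm⟩ := hmorse
  have hL0 : (0:ℝ) < L := lt_of_lt_of_le one_pos hL
  have hκ0 : (0:ℝ) ≤ κ 0 := le_trans zero_le_one (hκ1 0)
  have hκ11 : (1:ℝ) ≤ κ 1 := hκ1 1
  obtain ⟨s₀, hs₀1, hs₀⟩ := sublin_threshold hθsub (c := 1/(2*L)) (by positivity)
  have hparam : ∀ s, 0 ≤ s → s ≤ 2*L*dist (α s) o + s₀ := ray_param hL hα hs₀1 hs₀
  have hparam' : ∀ s, 0 ≤ s → s ≤ 2*L*dist (α' s) o + s₀ := ray_param hL hα' hs₀1 hs₀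
  have hZne : (α '' Set.Ici 0).Nonempty := ⟨α 0, 0, Set.mem_Ici.mpr le_rfl, rfl⟩
  have hZ'ne : (α' '' Set.Ici 0).Nonempty := ⟨α' 0, 0, Set.mem_Ici.mpr le_rfl, rfl⟩
  have hoZ' : o ∈ α' '' Set.Ici 0 := ⟨0, Set.mem_Ici.mpr le_rfl, hα'.1⟩
  refine ⟨fun q Q => (|m q Q| + 1) +
      n * ((2*L + 2*L*(|m q Q| + 1)*κ 1) + (2*L*(|m q Q| + 1)*κ 1 + s₀)) * κ 1, ?_⟩
  intro q Q β hβ htrack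
  set M : ℝ := |m q Q| + 1 with hMdef
  have hM1 : (1:ℝ) ≤ M := by rw [hMdef]; have := abs_nonneg (m q Q); linarith
  set C₃ : ℝ := 2*L + 2*L*M*κ 1 with hC₃def
  set C₄ : ℝ := 2*L*M*κ 1 + s₀ with hC₄def
  clear_value M C₃ C₄
  have h2LM : (0:ℝ) ≤ 2*L*M*κ 1 :=
    mul_nonneg (mul_nonneg (mul_nonneg (by norm_num : (0:ℝ) ≤ 2) hL0.le) (by linarith)) (by linarith)
  have hC₃1 : (1:ℝ) ≤ C₃ := by rw [hC₃def]; linarith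
  have hC₄0 : (0:ℝ) ≤ C₄ := by rw [hC₄def]; linarith
  -- distance bound for β
  have hdt : ∀ t, 0 ≤ t → dist (β t) o ≤ |q| * t + |Q| := by
    intro t ht
    have h := (hβ.2 t 0 ht le_rfl).2
    rw [hβ.1, sub_zero, abs_of_nonneg ht] at h
    have h1 : q * t ≤ |q| * t := mul_le_mul_of_nonneg_right (le_abs_self q) ht
    have h2 : Q ≤ |Q| := le_abs_self Q
    linarith
  -- Step A : β sublinearly tracks α too
  set B : ℝ := 2*L*(2*(|q|+|Q|)+1) + s₀ with hBdef
  clear_value B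
  have hBpos : (0:ℝ) < B := by nlinarith [abs_nonneg q, abs_nonneg Q]
  have keyA : ∀ t, 1 ≤ t →
      infDist (β t) (α '' Set.Ici 0) ≤ infDist (β t) (α' '' Set.Ici 0) + n * κ (B * t) := by
    intro t ht1
    have ht0 : (0:ℝ) ≤ t := le_trans zero_le_one ht1
    refine le_of_forall_pos_le_add ?_
    intro ε hε
    have hε'0 : 0 < min ε 1 := lt_min hε one_pos
    obtain ⟨z, hz, hzd⟩ := (infDist_lt_iff hZ'ne).mp
      (lt_add_of_pos_right (infDist (β t) (α' '' Set.Ici 0)) hε'0)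
    obtain ⟨s, hs0, rfl⟩ := hz
    have hs0' : (0:ℝ) ≤ s := hs0
    have hdto : dist (β t) o ≤ |q| * t + |Q| := hdt t ht0
    have hinf' : infDist (β t) (α' '' Set.Ici 0) ≤ dist (β t) o := infDist_le_dist_of_mem hoZ'
    have htri : dist (α' s) o ≤ dist (β t) (α' s) + dist (β t) o := by
      rw [dist_comm (β t) (α' s)]; exact dist_triangle (α' s) (β t) o
    have hε1 : min ε 1 ≤ 1 := min_le_right ε 1
    have hdzo : dist (α' s) o ≤ 2*(|q| * t + |Q|) + 1 := by linarith
    have htm : (0:ℝ) ≤ t - 1 := by linarith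
    have hsB : s ≤ B * t := by
      have hp := hparam' s hs0'
      rw [hBdef]
      nlinarith [mul_le_mul_of_nonneg_left hdzo (by positivity : (0:ℝ) ≤ 2*L),
        mul_nonneg (mul_nonneg hL0.le (abs_nonneg Q)) htm,
        mul_nonneg hL0.le htm,
        mul_nonneg (by linarith : (0:ℝ) ≤ s₀) htm]
    have hκs : κ s ≤ κ (B*t) := hκm hsB
    have hmem : α s ∈ α '' Set.Ici 0 := ⟨s, hs0, rfl⟩
    have h1 : infDist (β t) (α '' Set.Ici 0) ≤ dist (β t) (α s) := infDist_le_dist_of_mem hmem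
    have h2 : dist (β t) (α s) ≤ dist (β t) (α' s) + dist (α' s) (α s) :=
      dist_triangle (β t) (α' s) (α s)
    have h3 : dist (α' s) (α s) ≤ n * κ s := by rw [dist_comm]; exact hft s hs0'
    have h4 : n * κ s ≤ n * κ (B*t) := mul_le_mul_of_nonneg_left hκs hn.le
    have hεε : min ε 1 ≤ ε := min_le_left ε 1
    linarith
  have htrack' : Tendsto (fun t => infDist (β t) (α '' Set.Ici 0) / t) atTop (nhds 0) := by
    have hBt : Tendsto (fun t : ℝ => B * t) atTop atTop :=
      Tendsto.const_mul_atTop hBpos tendsto_id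
    have h1 : Tendsto (fun t => κ (B*t) / (B*t)) atTop (nhds 0) := hκsub.comp hBt
    have h2 : Tendsto (fun t => n * (B * (κ (B*t) / (B*t)))) atTop (nhds 0) := by
      have := (h1.const_mul B).const_mul n
      simpa using this
    have h3 : Tendsto (fun t => infDist (β t) (α' '' Set.Ici 0) / t
        + n * (B * (κ (B*t) / (B*t)))) atTop (nhds 0) := by
      simpa using htrack.add h2
    refine squeeze_zero' ?_ ?_ h3
    · filter_upwards [eventually_ge_atTop (1:ℝ)] with t ht
      exact div_nonneg infDist_nonneg (le_trans zero_le_one ht)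
    · filter_upwards [eventually_ge_atTop (1:ℝ)] with t ht
      have ht0 : (0:ℝ) < t := lt_of_lt_of_le one_pos ht
      have he : n * (B * (κ (B*t) / (B*t))) = n * κ (B*t) / t := by
        field_simp
      rw [he]
      calc infDist (β t) (α '' Set.Ici 0) / t
          ≤ (infDist (β t) (α' '' Set.Ici 0) + n * κ (B*t)) / t :=
            (div_le_div_iff_of_pos_right ht0).mpr (keyA t ht)
        _ = infDist (β t) (α' '' Set.Ici 0) / t + n * κ (B*t) / t := add_div _ _ _
  -- Step B : apply Morseness of α
  have H := hm q Q β hβ htrack'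
  -- Step C
  intro t ht
  have hd0 : (0:ℝ) ≤ dist (β t) o := dist_nonneg
  set d : ℝ := dist (β t) o with hddef
  clear_value d
  have hκd1 : (1:ℝ) ≤ κ d := hκ1 d
  have hθd1 : (1:ℝ) ≤ θ d := hθ1 d
  beta_reduce
  rw [← hMdef, ← hC₃def, ← hC₄def]
  refine le_of_forall_pos_le_add ?_
  intro ε hε
  have hε'0 : 0 < min ε 1 := lt_min hε one_pos
  have hinfZ : infDist (β t) (α '' Set.Ici 0) ≤ (M - 1) * κ d := by
    have h := H t ht
    rw [← hddef] at h
    have : m q Q * κ d ≤ |m q Q| * κ d :=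
      mul_le_mul_of_nonneg_right (le_abs_self _) (by linarith)
    have hM : M - 1 = |m q Q| := by simp [hMdef]
    rw [hM]
    exact le_trans h this
  obtain ⟨z, hz, hzd⟩ := (infDist_lt_iff hZne).mp
    (lt_add_of_pos_right (infDist (β t) (α '' Set.Ici 0)) hε'0)
  obtain ⟨s, hs0, rfl⟩ := hz
  have hs0' : (0:ℝ) ≤ s := hs0
  have hε1 : min ε 1 ≤ 1 := min_le_right ε 1
  have hεε : min ε 1 ≤ ε := min_le_left ε 1
  have htri : dist (α s) o ≤ dist (β t) (α s) + d := by
    rw [hddef, dist_comm (β t) (α s)]; exact dist_triangle (α s) (β t) o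
  have hdzo : dist (α s) o ≤ d + M * κ d := by nlinarith
  have hκdlin : κ d ≤ κ 1 * (d + 1) := kappa_le_affine hκc hκm hκ1 hd0
  have hsC : s ≤ C₃ * d + C₄ := by
    have hp := hparam s hs0'
    have h2L : (0:ℝ) ≤ 2*L := by linarith
    have h2LM0 : (0:ℝ) ≤ 2*L*M := mul_nonneg h2L (by linarith)
    rw [hC₃def, hC₄def]
    nlinarith [mul_le_mul_of_nonneg_left hdzo h2L,
      mul_le_mul_of_nonneg_left hκdlin h2LM0]
  have hκs : κ s ≤ (C₃ + C₄) * κ 1 * κ d :=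
    le_trans (hκm hsC) (kappa_affine_bound hκc hκm hκ1 hC₃1 hC₄0 hd0)
  have h1 : infDist (β t) (α' '' Set.Ici 0) ≤ dist (β t) (α' s) :=
    infDist_le_dist_of_mem ⟨s, hs0, rfl⟩
  have h2 : dist (β t) (α' s) ≤ dist (β t) (α s) + dist (α s) (α' s) :=
    dist_triangle (β t) (α s) (α' s)
  have h3 : dist (α s) (α' s) ≤ n * κ s := hft s hs0'
  have h4 : n * κ s ≤ n * ((C₃ + C₄) * κ 1 * κ d) := mul_le_mul_of_nonneg_left hκs hn.le
  have hm'0 : (0:ℝ) ≤ M + n * (C₃ + C₄) * κ 1 := by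
    have : (0:ℝ) ≤ n * (C₃ + C₄) * κ 1 :=
      mul_nonneg (mul_nonneg hn.le (by linarith)) (by linarith)
    linarith
  have hkθ : (0:ℝ) ≤ κ d + θ d := by linarith
  nlinarith [mul_nonneg hm'0 hkθ]
end

section
/- Let β be an (L,θ)-ray and a a geodesic ray, both based at 𝔬 in a proper geodesic metric space X. Suppose β ⊆ N_κ(a, m) for some function κ and constant m, i.e., d(β(t), a) ≤ m·κ(‖β(t)‖) for all t. Then a ⊆ N_{κ+θ}(β, m') for some constant m'; in particular, if κ dominates θ, then a ⊆ N_κ(β, m') for some m'. -/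
open Metric Set Filter

/-- A nonnegative concave function on `[0,∞)` satisfies `f (c*x) ≤ c * f x` for `c ≥ 1`. -/
lemma concave_scale_le {f : ℝ → ℝ} (hc : ConcaveOn ℝ (Set.Ici 0) f) (h0 : 0 ≤ f 0)
    {c x : ℝ} (hc1 : 1 ≤ c) (hx : 0 ≤ x) : f (c * x) ≤ c * f x := by
  have hcpos : (0:ℝ) < c := lt_of_lt_of_le one_pos hc1
  have hcx : (0:ℝ) ≤ c * x := mul_nonneg hcpos.le hx
  have h1 : (0:ℝ) ≤ 1 / c := by positivity
  have h2 : (0:ℝ) ≤ 1 - 1 / c := by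
    have : 1 / c ≤ 1 := by
      rw [div_le_one hcpos]; exact hc1
    linarith
  have hsum : 1 / c + (1 - 1 / c) = 1 := by ring
  have := hc.2 (mem_Ici.mpr hcx) (mem_Ici.mpr (le_refl (0:ℝ))) h1 h2 hsum
  have heq : (1 / c) • (c * x) + (1 - 1 / c) • (0:ℝ) = x := by
    simp only [smul_eq_mul]; field_simp; ring
  rw [heq] at this
  have : (1 / c) * f (c * x) ≤ f x := by
    have h3 : (0:ℝ) ≤ (1 - 1 / c) * f 0 := mul_nonneg h2 h0
    simp only [smul_eq_mul] at this
    linarith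
  calc f (c * x) = c * ((1 / c) * f (c * x)) := by field_simp
    _ ≤ c * f x := by
        apply mul_le_mul_of_nonneg_left this hcpos.le

/-- A sublinear function is eventually bounded by `ε * r`. -/
lemma sublinear_bound {f : ℝ → ℝ} (h : Tendsto (fun r => f r / r) atTop (nhds 0))
    {ε : ℝ} (hε : 0 < ε) : ∃ R : ℝ, 1 ≤ R ∧ ∀ r : ℝ, R ≤ r → f r ≤ ε * r := by
  have hev : ∀ᶠ r in atTop, f r / r < ε := h.eventually_lt_const hε
  obtain ⟨R₀, hR₀⟩ := eventually_atTop.mp hev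
  refine ⟨max R₀ 1, le_max_right _ _, fun r hr => ?_⟩
  have hr1 : (1:ℝ) ≤ r := le_trans (le_max_right R₀ 1) hr
  have hrpos : (0:ℝ) < r := lt_of_lt_of_le one_pos hr1
  have := hR₀ r (le_trans (le_max_left R₀ 1) hr)
  have := (div_lt_iff₀ hrpos).mp this
  linarith

set_option maxHeartbeats 1000000 in
/-- If an `(L,θ)`-ray `β` lies in the `κ`-neighborhood `N_κ(a, m)` of a geodesic
ray `a` from the same basepoint, then `a` lies in `N_{κ+θ}(β, m')` for some
constant `m'`; in particular, if `κ` dominates `θ`, then `a ⊆ N_κ(β, m'')`. -/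
theorem symmetry_of_neighborhoods
    {X : Type*} [MetricSpace X] [ProperSpace X]
    (o : X) (L : ℝ) (hL : 1 ≤ L)
    (κ θ : ℝ → ℝ)
    (hκc : ConcaveOn ℝ (Set.Ici 0) κ) (hκm : Monotone κ) (hκ1 : ∀ r : ℝ, 1 ≤ κ r)
    (hκsub : Tendsto (fun r => κ r / r) atTop (nhds 0))
    (hθc : ConcaveOn ℝ (Set.Ici 0) θ) (hθm : Monotone θ) (hθ1 : ∀ r : ℝ, 1 ≤ θ r)
    (hθsub : Tendsto (fun r => θ r / r) atTop (nhds 0))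
    (β : ℝ → X) (hβ : IsRay o L θ β)
    (a : ℝ → X) (ha0 : a 0 = o)
    (ha : ∀ s t : ℝ, 0 ≤ s → 0 ≤ t → dist (a s) (a t) = |s - t|)
    (m : ℝ)
    (hsub : ∀ t : ℝ, 0 ≤ t →
      infDist (β t) (a '' Set.Ici 0) ≤ m * κ (dist (β t) o)) :
    (∃ m' : ℝ, ∀ s : ℝ, 0 ≤ s →
      infDist (a s) (β '' Set.Ici 0) ≤ m' * (κ s + θ s)) ∧
    (Dominates κ θ → ∃ m'' : ℝ, ∀ s : ℝ, 0 ≤ s →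
      infDist (a s) (β '' Set.Ici 0) ≤ m'' * κ s) := by
  classical
  have hL0 : (0:ℝ) < L := lt_of_lt_of_le one_pos hL
  have haIci : (a '' Set.Ici 0).Nonempty :=
    ⟨a 0, Set.mem_image_of_mem a (Set.mem_Ici.mpr le_rfl)⟩
  set M : ℝ := max m 0 + 1 with hMdef
  clear_value M
  have hM1 : 1 ≤ M := by rw [hMdef]; exact le_add_of_nonneg_left (le_max_right m 0)
  have hM0 : (0:ℝ) < M := lt_of_lt_of_le one_pos hM1
  have hmM : m < M := by
    rw [hMdef]; exact lt_of_le_of_lt (le_max_left m 0) (lt_add_one _)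
  -- norm of points on the geodesic ray
  have hanorm : ∀ v : ℝ, 0 ≤ v → dist (a v) o = v := by
    intro v hv
    rw [← ha0, ha v 0 hv le_rfl, sub_zero, abs_of_nonneg hv]
  -- choose projections of β(n) onto the geodesic ray
  have hchoice : ∀ n : ℕ, ∃ v : ℝ, 0 ≤ v ∧ dist (β n) (a v) < M * κ (dist (β n) o) := by
    intro n
    have hn0 : (0:ℝ) ≤ (n:ℝ) := Nat.cast_nonneg n
    have h1 := hsub n hn0
    have hκpos : (0:ℝ) < κ (dist (β n) o) := lt_of_lt_of_le one_pos (hκ1 _)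
    have hlt : infDist (β n) (a '' Set.Ici 0) < M * κ (dist (β n) o) :=
      lt_of_le_of_lt h1 (mul_lt_mul_of_pos_right hmM hκpos)
    obtain ⟨y, hy, hdy⟩ := (infDist_lt_iff haIci).mp hlt
    obtain ⟨v, hv, rfl⟩ := hy
    exact ⟨v, hv, hdy⟩
  choose u hu0 hud using hchoice
  set r : ℕ → ℝ := fun n => dist (β n) o with hrdef
  clear_value r
  have hr0 : ∀ n, 0 ≤ r n := by intro n; simp only [hrdef]; exact dist_nonneg
  have hur : ∀ n : ℕ, |u n - r n| ≤ M * κ (r n) := by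
    intro n
    have h1 : |dist (a (u n)) o - dist (β n) o| ≤ dist (a (u n)) (β n) :=
      abs_dist_sub_le _ _ _
    rw [hanorm (u n) (hu0 n)] at h1
    simp only [hrdef]
    calc |u n - dist (β ↑n) o| ≤ dist (a (u n)) (β n) := h1
      _ ≤ M * κ (dist (β ↑n) o) := by rw [dist_comm]; exact (hud n).le
  -- sublinearity constants
  obtain ⟨R₀, hR₀1, hR₀⟩ := sublinear_bound hκsub (show (0:ℝ) < 1 / (2 * M) by positivity)
  obtain ⟨N₁, hN₁1, hN₁⟩ := sublinear_bound hθsub (show (0:ℝ) < 1 / (2 * L) by positivity)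
  have hR₀0 : (0:ℝ) ≤ R₀ := le_trans zero_le_one hR₀1
  have hN₁0 : (0:ℝ) ≤ N₁ := le_trans zero_le_one hN₁1
  have hκsmall : ∀ x : ℝ, R₀ ≤ x → M * κ x ≤ x / 2 := by
    intro x hx
    have h1 := hR₀ x hx
    rw [div_mul_eq_mul_div, one_mul, le_div_iff₀ (by positivity : (0:ℝ) < 2 * M)] at h1
    linarith
  -- lower bound on ‖β n‖
  have hβ0 : β ((0:ℕ):ℝ) = o := by rw [Nat.cast_zero]; exact hβ.1
  have hrlow : ∀ n : ℕ, (1 / L) * (n:ℝ) - θ (n:ℝ) ≤ r n := by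
    intro n
    simp only [hrdef]
    have h := (hβ.2 (n:ℝ) 0 (Nat.cast_nonneg n) le_rfl).1
    rw [sub_zero, abs_of_nonneg (Nat.cast_nonneg n : (0:ℝ) ≤ (n:ℝ)),
      max_eq_left (Nat.cast_nonneg n : (0:ℝ) ≤ (n:ℝ)), hβ.1] at h
    exact h
  -- distance between consecutive β points
  have hβstep : ∀ n : ℕ, dist (β ((n:ℝ) + 1)) (β (n:ℝ)) ≤ L + θ ((n:ℝ) + 1) := by
    intro n
    have hn0 : (0:ℝ) ≤ (n:ℝ) := Nat.cast_nonneg n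
    have h := (hβ.2 ((n:ℝ) + 1) (n:ℝ) (by linarith) hn0).2
    rw [max_eq_left (by linarith : (n:ℝ) ≤ (n:ℝ) + 1)] at h
    have he : |(n:ℝ) + 1 - (n:ℝ)| = 1 := by
      rw [show (n:ℝ) + 1 - (n:ℝ) = 1 by ring, abs_one]
    rw [he, mul_one] at h
    exact h
  -- main constants
  set cQ : ℝ := 4 * L * R₀ + N₁ + 1 with hcQdef
  clear_value cQ
  set cr : ℝ := 2 * R₀ + L + cQ with hcrdef
  clear_value cr
  set Cx : ℝ := M * cr + 4 * M * R₀ with hCxdef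
  clear_value Cx
  set Cy : ℝ := L + cQ with hCydef
  clear_value Cy
  have hLR₀ : (0:ℝ) ≤ 4 * L * R₀ := by positivity
  have hcQ1 : 1 ≤ cQ := by rw [hcQdef]; linarith
  have hcQ0 : 0 ≤ cQ := by linarith
  have hcr1 : 1 ≤ cr := by rw [hcrdef]; linarith
  have hcr0 : 0 ≤ cr := by linarith
  have hCx0 : 0 ≤ Cx := by
    rw [hCxdef]
    have h1 : 0 ≤ M * cr := mul_nonneg hM0.le hcr0
    have h2 : 0 ≤ 4 * M * R₀ := by positivity
    linarith
  have hCy0 : 0 ≤ Cy := by rw [hCydef]; linarith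
  have hCxM : M ≤ Cx := by
    rw [hCxdef]
    have h1 : M * 1 ≤ M * cr := mul_le_mul_of_nonneg_left hcr1 hM0.le
    have h2 : 0 ≤ 4 * M * R₀ := by positivity
    linarith
  set C₅ : ℝ := Cx + Cy with hC₅def
  clear_value C₅
  have hC₅0 : 0 ≤ C₅ := by linarith
  -- the key estimate for large s
  have key : ∀ s : ℝ, N₁ ≤ s →
      infDist (a s) (β '' Set.Ici 0) ≤ C₅ * (κ s + θ s) := by
    intro s hs
    have hs1 : (1:ℝ) ≤ s := le_trans hN₁1 hs
    have hs0 : (0:ℝ) ≤ s := le_trans zero_le_one hs1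
    have hκs1 : (1:ℝ) ≤ κ s := hκ1 s
    have hθs1 : (1:ℝ) ≤ θ s := hθ1 s
    have hκs0 : (0:ℝ) ≤ κ s := by linarith
    have hθs0 : (0:ℝ) ≤ θ s := by linarith
    have hθss : θ s ≤ s := by
      have h1 := hN₁ s hs
      have h2 : 1 / (2 * L) ≤ 1 := by
        rw [div_le_one (by positivity : (0:ℝ) < 2 * L)]; linarith
      have h3 := mul_le_mul_of_nonneg_right h2 hs0
      linarith
    -- reduce to a distance bound of the form Cx * κ s + Cy * θ s
    have suff : ∀ d : ℝ, infDist (a s) (β '' Set.Ici 0) ≤ d →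
        d ≤ Cx * κ s + Cy * θ s →
        infDist (a s) (β '' Set.Ici 0) ≤ C₅ * (κ s + θ s) := by
      intro d h1 h2
      have e : C₅ * (κ s + θ s) = Cx * κ s + Cx * θ s + Cy * κ s + Cy * θ s := by
        rw [hC₅def]; ring
      have p1 : 0 ≤ Cx * θ s := mul_nonneg hCx0 hθs0
      have p2 : 0 ≤ Cy * κ s := mul_nonneg hCy0 hκs0
      linarith
    by_cases hcase : u 0 ≤ s
    · -- main case: crossing index exists
      set T : ℝ := max R₀ (2 * s + 1) with hTdef
      clear_value T
      have hT0 : (0:ℝ) ≤ T := by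
        rw [hTdef]; exact le_trans hR₀0 (le_max_left _ _)
      set N : ℕ := ⌈max N₁ (2 * L * T)⌉₊ with hNdef
      clear_value N
      have hNc : max N₁ (2 * L * T) ≤ (N:ℝ) := by rw [hNdef]; exact Nat.le_ceil _
      have hNs : s < u N := by
        have h1 : N₁ ≤ (N:ℝ) := le_trans (le_max_left _ _) hNc
        have h2 : 2 * L * T ≤ (N:ℝ) := le_trans (le_max_right _ _) hNc
        have hθN : θ (N:ℝ) ≤ 1 / (2 * L) * (N:ℝ) := hN₁ _ h1
        have hrN : T ≤ r N := by
          have h3 := hrlow N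
          have e1 : T ≤ 1 / (2 * L) * (N:ℝ) := by
            rw [div_mul_eq_mul_div, one_mul, le_div_iff₀ (by positivity : (0:ℝ) < 2 * L)]
            linarith
          have e2 : (1 / L) * (N:ℝ) - 1 / (2 * L) * (N:ℝ) = 1 / (2 * L) * (N:ℝ) := by
            field_simp; ring
          linarith
        have hrN' : R₀ ≤ r N := le_trans (by rw [hTdef]; exact le_max_left _ _) hrN
        have hsm := hκsmall (r N) hrN'
        have habs := abs_le.mp (hur N)
        have hT2 : 2 * s + 1 ≤ T := by rw [hTdef]; exact le_max_right _ _
        linarith [habs.1]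
      set n : ℕ := Nat.findGreatest (fun k => u k ≤ s) N with hndef
      clear_value n
      have hn_le : u n ≤ s := by
        rw [hndef]
        exact Nat.findGreatest_spec (P := fun k => u k ≤ s) (Nat.zero_le N) hcase
      have hnN : n ≤ N := by rw [hndef]; exact Nat.findGreatest_le N
      have hnltN : n < N := by
        rcases lt_or_eq_of_le hnN with h | h
        · exact h
        · exfalso; rw [h] at hn_le; linarith
      have hnext : s < u (n + 1) := by
        by_contra h
        push_neg at h
        have hg := Nat.findGreatest_is_greatest (P := fun k => u k ≤ s) (n := N) (k := n + 1)
          (by rw [← hndef]; exact Nat.lt_succ_of_le le_rfl) (Nat.succ_le_of_lt hnltN)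
        exact hg h
      -- bound r n
      have hrn : r n ≤ 2 * max s R₀ := by
        by_cases h : r n ≤ R₀
        · linarith [le_max_right s R₀]
        · push_neg at h
          have hsm := hκsmall (r n) h.le
          have habs := abs_le.mp (hur n)
          linarith [le_max_left s R₀, habs.1]
      have hmaxsR : max s R₀ ≤ R₀ * s :=
        max_le (le_mul_of_one_le_left hs0 hR₀1) (le_mul_of_one_le_right hR₀0 hs1)
      have hrnP : r n ≤ 2 * R₀ * s := by linarith
      -- bound n
      have hn_real : (n:ℝ) + 1 ≤ cQ * s := by
        have hnb : (n:ℝ) ≤ 4 * L * R₀ * s + N₁ := by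
          by_cases h : (n:ℝ) ≤ N₁
          · have : (0:ℝ) ≤ 4 * L * R₀ * s := by positivity
            linarith
          · push_neg at h
            have hθn : θ (n:ℝ) ≤ 1 / (2 * L) * (n:ℝ) := hN₁ _ h.le
            have hlow := hrlow n
            have e2 : (1 / L) * (n:ℝ) - 1 / (2 * L) * (n:ℝ) = 1 / (2 * L) * (n:ℝ) := by
              field_simp; ring
            have h4 : 1 / (2 * L) * (n:ℝ) ≤ r n := by linarith
            rw [div_mul_eq_mul_div, one_mul, div_le_iff₀ (by positivity : (0:ℝ) < 2 * L)] at h4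
            have h5 : r n * (2 * L) ≤ 2 * R₀ * s * (2 * L) :=
              mul_le_mul_of_nonneg_right hrnP (by positivity)
            linarith
        have e : cQ * s = 4 * L * R₀ * s + N₁ * s + s := by rw [hcQdef]; ring
        have h6 : N₁ ≤ N₁ * s := le_mul_of_one_le_right hN₁0 hs1
        linarith
      have hθn1 : θ ((n:ℝ) + 1) ≤ cQ * θ s := by
        calc θ ((n:ℝ) + 1) ≤ θ (cQ * s) := hθm hn_real
          _ ≤ cQ * θ s := concave_scale_le hθc (le_trans zero_le_one (hθ1 0)) hcQ1 hs0
      have hθn1s : θ ((n:ℝ) + 1) ≤ cQ * s := by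
        have h1 : cQ * θ s ≤ cQ * s := mul_le_mul_of_nonneg_left hθss hcQ0
        linarith
      -- bound r (n+1)
      have hcast : ((n + 1 : ℕ):ℝ) = (n:ℝ) + 1 := by push_cast; ring
      have hrn1 : r (n + 1) ≤ cr * s := by
        have htri : r (n + 1) ≤ dist (β ((n+1:ℕ):ℝ)) (β (n:ℝ)) + r n := by
          simp only [hrdef]; exact dist_triangle _ _ _
        rw [hcast] at htri
        have hstep := hβstep n
        have e : cr * s = 2 * R₀ * s + L * s + cQ * s := by rw [hcrdef]; ring
        have hLs : L ≤ L * s := le_mul_of_one_le_right hL0.le hs1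
        linarith
      have hκrn : κ (r n) ≤ 2 * R₀ * κ s := by
        calc κ (r n) ≤ κ (2 * R₀ * s) := hκm hrnP
          _ ≤ 2 * R₀ * κ s :=
            concave_scale_le hκc (le_trans zero_le_one (hκ1 0)) (by linarith) hs0
      have hκrn1 : κ (r (n + 1)) ≤ cr * κ s := by
        calc κ (r (n + 1)) ≤ κ (cr * s) := hκm hrn1
          _ ≤ cr * κ s := concave_scale_le hκc (le_trans zero_le_one (hκ1 0)) hcr1 hs0
      -- the distance bound
      have hdistb : dist (a s) (β (n:ℝ)) ≤ Cx * κ s + Cy * θ s := by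
        have h1 : dist (a s) (β (n:ℝ)) ≤ dist (a s) (a (u n)) + dist (a (u n)) (β (n:ℝ)) :=
          dist_triangle _ _ _
        have h2 : dist (a s) (a (u n)) = s - u n := by
          rw [ha s (u n) hs0 (hu0 n), abs_of_nonneg (by linarith)]
        have h3 : dist (a (u n)) (β (n:ℝ)) ≤ M * κ (r n) := by
          simp only [hrdef]; rw [dist_comm]; exact (hud n).le
        have h4 : u (n + 1) - u n ≤ M * κ (r (n + 1)) + (L + θ ((n:ℝ) + 1)) + M * κ (r n) := by
          have e : dist (a (u (n+1))) (a (u n)) = |u (n+1) - u n| :=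
            ha _ _ (hu0 _) (hu0 _)
          have t1 : dist (a (u (n+1))) (a (u n)) ≤
              dist (a (u (n+1))) (β ((n+1:ℕ):ℝ)) + dist (β ((n+1:ℕ):ℝ)) (β (n:ℝ))
              + dist (β (n:ℝ)) (a (u n)) := dist_triangle4 _ _ _ _
          rw [hcast] at t1
          have t2 : dist (a (u (n+1))) (β ((n+1:ℕ):ℝ)) ≤ M * κ (r (n+1)) := by
            simp only [hrdef]; rw [dist_comm]; exact (hud (n+1)).le
          rw [hcast] at t2
          have t3 := hβstep n
          have t4 : dist (β (n:ℝ)) (a (u n)) ≤ M * κ (r n) := by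
            simp only [hrdef]; exact (hud n).le
          have t5 : u (n+1) - u n ≤ |u (n+1) - u n| := le_abs_self _
          rw [← e] at t5
          linarith
        have h5 : s - u n ≤ u (n + 1) - u n := by linarith
        have hLs : L ≤ L * θ s := le_mul_of_one_le_right hL0.le hθs1
        have b1 : M * κ (r (n+1)) ≤ M * (cr * κ s) :=
          mul_le_mul_of_nonneg_left hκrn1 hM0.le
        have b2 : M * κ (r n) ≤ M * (2 * R₀ * κ s) :=
          mul_le_mul_of_nonneg_left hκrn hM0.le
        have e : Cx * κ s + Cy * θ s
            = M * (cr * κ s) + 2 * (M * (2 * R₀ * κ s)) + L * θ s + cQ * θ s := by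
          rw [hCxdef, hCydef]; ring
        linarith
      have hmem : β (n:ℝ) ∈ β '' Set.Ici 0 := ⟨(n:ℝ), Set.mem_Ici.mpr (Nat.cast_nonneg n), rfl⟩
      exact suff _ (infDist_le_dist_of_mem hmem) hdistb
    · -- case u 0 > s : then s itself is small
      push_neg at hcase
      have hr00 : r 0 = 0 := by
        simp only [hrdef]
        rw [hβ0, dist_self]
      have hu0b : u 0 ≤ M * κ 0 := by
        have h1 := hur 0
        rw [hr00, sub_zero, abs_of_nonneg (hu0 0)] at h1
        exact h1
      have hκ0s : κ 0 ≤ κ s := hκm hs0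
      have hsM : s ≤ M * κ s := by
        have h1 : M * κ 0 ≤ M * κ s := mul_le_mul_of_nonneg_left hκ0s hM0.le
        linarith
      have hmem : β ((0:ℕ):ℝ) ∈ β '' Set.Ici 0 :=
        ⟨((0:ℕ):ℝ), Set.mem_Ici.mpr (Nat.cast_nonneg 0), rfl⟩
      have hd0 : dist (a s) (β ((0:ℕ):ℝ)) = s := by rw [hβ0]; exact hanorm s hs0
      refine suff s ?_ ?_
      · calc infDist (a s) (β '' Set.Ici 0) ≤ dist (a s) (β ((0:ℕ):ℝ)) :=
            infDist_le_dist_of_mem hmem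
          _ = s := hd0
      · have p1 : M * κ s ≤ Cx * κ s := mul_le_mul_of_nonneg_right hCxM hκs0
        have p2 : 0 ≤ Cy * θ s := mul_nonneg hCy0 hθs0
        linarith
  -- assemble the first conclusion
  set m' : ℝ := max C₅ N₁ with hm'def
  clear_value m'
  have hm'0 : (0:ℝ) ≤ m' := by
    rw [hm'def]; exact le_trans hN₁0 (le_max_right _ _)
  have main : ∀ s : ℝ, 0 ≤ s → infDist (a s) (β '' Set.Ici 0) ≤ m' * (κ s + θ s) := by
    intro s hs0
    have hκθ2 : (2:ℝ) ≤ κ s + θ s := by linarith [hκ1 s, hθ1 s]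
    by_cases hcase : N₁ ≤ s
    · have h1 := key s hcase
      have h2 : C₅ * (κ s + θ s) ≤ m' * (κ s + θ s) :=
        mul_le_mul_of_nonneg_right (by rw [hm'def]; exact le_max_left _ _) (by linarith)
      linarith
    · push_neg at hcase
      have hmem : β ((0:ℕ):ℝ) ∈ β '' Set.Ici 0 :=
        ⟨((0:ℕ):ℝ), Set.mem_Ici.mpr (Nat.cast_nonneg 0), rfl⟩
      have hd0 : dist (a s) (β ((0:ℕ):ℝ)) = s := by rw [hβ0]; exact hanorm s hs0
      have h1 : infDist (a s) (β '' Set.Ici 0) ≤ s := by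
        calc infDist (a s) (β '' Set.Ici 0) ≤ dist (a s) (β ((0:ℕ):ℝ)) :=
            infDist_le_dist_of_mem hmem
          _ = s := hd0
      have hN₁m' : N₁ ≤ m' := by rw [hm'def]; exact le_max_right _ _
      have h2 : m' * 2 ≤ m' * (κ s + θ s) := mul_le_mul_of_nonneg_left hκθ2 hm'0
      linarith
  constructor
  · exact ⟨m', main⟩
  · rintro ⟨C₁, hC₁, C₂, t₀, hdom⟩
    set K : ℝ := 1 + (1 + |C₂|) / C₁ with hKdef
    clear_value K
    have hK0 : (0:ℝ) ≤ K := by rw [hKdef]; positivity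
    set m'' : ℝ := max (m' * K) (max t₀ 1) with hm''def
    clear_value m''
    have hm''1 : (1:ℝ) ≤ m'' := by
      rw [hm''def]; exact le_trans (le_max_right t₀ 1) (le_max_right _ _)
    refine ⟨m'', fun s hs0 => ?_⟩
    have hκs1 : (1:ℝ) ≤ κ s := hκ1 s
    by_cases hcase : s ≤ max t₀ 1
    · have hmem : β ((0:ℕ):ℝ) ∈ β '' Set.Ici 0 :=
        ⟨((0:ℕ):ℝ), Set.mem_Ici.mpr (Nat.cast_nonneg 0), rfl⟩
      have hd0 : dist (a s) (β ((0:ℕ):ℝ)) = s := by rw [hβ0]; exact hanorm s hs0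
      have h1 : infDist (a s) (β '' Set.Ici 0) ≤ s := by
        calc infDist (a s) (β '' Set.Ici 0) ≤ dist (a s) (β ((0:ℕ):ℝ)) :=
            infDist_le_dist_of_mem hmem
          _ = s := hd0
      have h2 : max t₀ 1 ≤ m'' := by rw [hm''def]; exact le_max_right _ _
      have h3 : m'' ≤ m'' * κ s := le_mul_of_one_le_right (by linarith) hκs1
      linarith
    · push_neg at hcase
      have hst₀ : t₀ < s := lt_of_le_of_lt (le_max_left t₀ 1) hcase
      have hdoms := hdom s hst₀
      have hθs : θ s ≤ (1 + |C₂|) / C₁ * κ s := by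
        rw [div_mul_eq_mul_div, le_div_iff₀ hC₁]
        have h1 : -C₂ ≤ |C₂| := neg_le_abs C₂
        have h2 : |C₂| ≤ |C₂| * κ s := le_mul_of_one_le_right (abs_nonneg C₂) hκs1
        linarith
      have h1 := main s hs0
      have hKe : κ s + θ s ≤ K * κ s := by
        have e : K * κ s = κ s + (1 + |C₂|) / C₁ * κ s := by rw [hKdef]; ring
        linarith
      have h2 : m' * (κ s + θ s) ≤ m' * (K * κ s) :=
        mul_le_mul_of_nonneg_left hKe hm'0
      have h3 : m' * K * κ s ≤ m'' * κ s :=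
        mul_le_mul_of_nonneg_right (by rw [hm''def]; exact le_max_left _ _) (by linarith)
      have e2 : m' * (K * κ s) = m' * K * κ s := by ring
      linarith
end

section
/- Let Φ : X → Y be an (L,θ)-SBE between proper geodesic pointed metric spaces, and let κ dominate θ. If α and β are quasigeodesic rays in X that κ-fellow travel each other (∃n: d(α(t),β(t)) ≤ n·κ(t) for all t), then Φ∘α and Φ∘β κ-fellow travel each other in Y: there exists n' (depending on n, L, and the domination constants) with d(Φα(t), Φβ(t)) ≤ n'·κ(t) for all t. -/
open Metric Set Filter

lemma concave_scale_s12 {κ : ℝ → ℝ} (hκc : ConcaveOn ℝ (Set.Ici 0) κ) (hκ0 : 0 ≤ κ 0)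
    {c s : ℝ} (hc : 1 ≤ c) (hs : 0 ≤ s) : κ (c * s) ≤ c * κ s := by
  have hc0 : 0 < c := lt_of_lt_of_le one_pos hc
  have ha : (0:ℝ) ≤ 1 / c := by positivity
  have hb : (0:ℝ) ≤ 1 - 1 / c := by
    have : 1 / c ≤ 1 := by rw [div_le_one hc0]; exact hc
    linarith
  have hmem1 : c * s ∈ Set.Ici (0:ℝ) := Set.mem_Ici.mpr (by positivity)
  have hmem0 : (0:ℝ) ∈ Set.Ici (0:ℝ) := Set.mem_Ici.mpr le_rfl
  have h := hκc.2 hmem1 hmem0 ha hb (by ring)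
  have hx : (1 / c) • (c * s) + (1 - 1 / c) • (0:ℝ) = s := by
    simp only [smul_eq_mul, mul_zero, add_zero]
    field_simp
  rw [hx] at h
  have h' : 1 / c * κ (c * s) + (1 - 1 / c) * κ 0 ≤ κ s := h
  have h2 : κ (c * s) + c * (1 - 1 / c) * κ 0 ≤ c * κ s := by
    calc κ (c * s) + c * (1 - 1 / c) * κ 0
        = c * (1 / c * κ (c * s) + (1 - 1 / c) * κ 0) := by
          field_simp
      _ ≤ c * κ s := by
          exact mul_le_mul_of_nonneg_left h' hc0.le
  have h3 : 0 ≤ c * (1 - 1 / c) * κ 0 :=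
    mul_nonneg (mul_nonneg hc0.le hb) hκ0
  linarith

/-- An SBE preserves `κ`-fellow travelling of quasigeodesic rays, when `κ`
dominates `θ`. -/
theorem sbe_preserves_fellow_travel
    {X Y : Type*} [MetricSpace X] [MetricSpace Y] [ProperSpace X] [ProperSpace Y]
    (oX : X) (oY : Y) (L : ℝ) (hL : 1 ≤ L)
    (κ θ : ℝ → ℝ)
    (hκc : ConcaveOn ℝ (Set.Ici 0) κ) (hκm : Monotone κ) (hκ1 : ∀ r : ℝ, 1 ≤ κ r)
    (hκsub : Tendsto (fun r => κ r / r) atTop (nhds 0))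
    (hθc : ConcaveOn ℝ (Set.Ici 0) θ) (hθm : Monotone θ) (hθ1 : ∀ r : ℝ, 1 ≤ θ r)
    (hθsub : Tendsto (fun r => θ r / r) atTop (nhds 0))
    (hdom : Dominates κ θ)
    (Φ : X → Y) (hΦ : IsSBE oX oY L θ Φ)
    (q Q q' Q' : ℝ) (α β : ℝ → X)
    (hα : IsQGRay oX q Q α) (hβ : IsQGRay oX q' Q' β)
    (n : ℝ) (hn : 0 < n)
    (hft : ∀ t : ℝ, 0 ≤ t → dist (α t) (β t) ≤ n * κ t) :
    ∃ n' > (0:ℝ), ∀ t : ℝ, 0 ≤ t → dist (Φ (α t)) (Φ (β t)) ≤ n' * κ t := by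
  obtain ⟨hΦ1, _⟩ := hΦ
  obtain ⟨C₁, hC₁, C₂, t₀, hdom'⟩ := hdom
  obtain ⟨hα0, hα'⟩ := hα
  obtain ⟨hβ0, hβ'⟩ := hβ
  have hκ0 : (0:ℝ) ≤ κ 0 := le_trans zero_le_one (hκ1 0)
  -- constants
  set E : ℝ := max (max q q') 0 + max (max Q Q') 0 + 1 with hE_def
  have hE1 : 1 ≤ E := by
    have h1 : (0:ℝ) ≤ max (max q q') 0 := le_max_right _ _
    have h2 : (0:ℝ) ≤ max (max Q Q') 0 := le_max_right _ _
    simp only [hE_def]; linarith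
  set K₀ : ℝ := κ (t₀ + 1) + |C₂| with hK₀_def
  have hK₀0 : 0 ≤ K₀ := by
    have := hκ1 (t₀ + 1)
    have := abs_nonneg C₂
    simp only [hK₀_def]; linarith
  -- θ s ≤ C₁⁻¹ * (κ s + K₀) for all s
  have hθκ : ∀ s : ℝ, C₁ * θ s ≤ κ s + K₀ := by
    intro s
    rcases le_or_gt s t₀ with hs | hs
    · have h1 : θ s ≤ θ (t₀ + 1) := hθm (by linarith)
      have h2 : C₁ * θ (t₀ + 1) + C₂ ≤ κ (t₀ + 1) := hdom' _ (by linarith)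
      have h3 : C₂ ≥ -|C₂| := neg_abs_le C₂
      have h4 : 1 ≤ κ s := hκ1 s
      have h5 : C₁ * θ s ≤ C₁ * θ (t₀ + 1) := mul_le_mul_of_nonneg_left h1 hC₁.le
      simp only [hK₀_def]; linarith
    · have h2 : C₁ * θ s + C₂ ≤ κ s := hdom' _ hs
      have h3 : C₂ ≥ -|C₂| := neg_abs_le C₂
      have h4 : 1 ≤ κ (t₀ + 1) := hκ1 _
      simp only [hK₀_def]; linarith
  -- κ (t+1) ≤ (2 + κ 2) * κ t for t ≥ 0
  have hκshift : ∀ t : ℝ, 0 ≤ t → κ (t + 1) ≤ (2 + κ 2) * κ t := by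
    intro t ht
    have hκt : 1 ≤ κ t := hκ1 t
    have hκ2 : 1 ≤ κ 2 := hκ1 2
    rcases le_or_gt t 1 with h | h
    · have h1 : κ (t + 1) ≤ κ 2 := hκm (by linarith)
      nlinarith
    · have h1 : κ (t + 1) ≤ κ (2 * t) := hκm (by linarith)
      have h2 : κ (2 * t) ≤ 2 * κ t := concave_scale_s12 hκc hκ0 one_le_two ht
      nlinarith
  refine ⟨L * n + C₁⁻¹ * (E * (2 + κ 2) + K₀), ?_, ?_⟩
  · have hκ2 : 1 ≤ κ 2 := hκ1 2
    have hC₁' : 0 < C₁⁻¹ := inv_pos.mpr hC₁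
    have h1 : 0 < L * n := mul_pos (by linarith) hn
    have h2 : 0 ≤ C₁⁻¹ * (E * (2 + κ 2) + K₀) := by
      apply mul_nonneg hC₁'.le
      nlinarith
    linarith
  intro t ht
  -- norm bounds on α t, β t
  have hαt : dist (α t) oX ≤ q * t + Q := by
    have := (hα' t 0 ht le_rfl).2
    rw [hα0] at this
    simpa [abs_of_nonneg ht] using this
  have hβt : dist (β t) oX ≤ q' * t + Q' := by
    have := (hβ' t 0 ht le_rfl).2
    rw [hβ0] at this
    simpa [abs_of_nonneg ht] using this
  set M : ℝ := max (dist (α t) oX) (dist (β t) oX) with hM_def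
  have hME : M ≤ E * (t + 1) := by
    have h1 : q * t + Q ≤ E * (t + 1) := by
      have hq : q ≤ max (max q q') 0 := le_trans (le_max_left _ _) (le_max_left _ _)
      have hQ : Q ≤ max (max Q Q') 0 := le_trans (le_max_left _ _) (le_max_left _ _)
      have h1a : q * t ≤ max (max q q') 0 * t := mul_le_mul_of_nonneg_right hq ht
      have h2a : (0:ℝ) ≤ max (max q q') 0 := le_max_right _ _
      have h3a : (0:ℝ) ≤ max (max Q Q') 0 := le_max_right _ _
      simp only [hE_def]; nlinarith
    have h2 : q' * t + Q' ≤ E * (t + 1) := by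
      have hq : q' ≤ max (max q q') 0 := le_trans (le_max_right _ _) (le_max_left _ _)
      have hQ : Q' ≤ max (max Q Q') 0 := le_trans (le_max_right _ _) (le_max_left _ _)
      have h1a : q' * t ≤ max (max q q') 0 * t := mul_le_mul_of_nonneg_right hq ht
      have h2a : (0:ℝ) ≤ max (max q q') 0 := le_max_right _ _
      have h3a : (0:ℝ) ≤ max (max Q Q') 0 := le_max_right _ _
      simp only [hE_def]; nlinarith
    exact max_le (le_trans hαt h1) (le_trans hβt h2)
  have hκM : κ M ≤ E * (2 + κ 2) * κ t := by
    calc κ M ≤ κ (E * (t + 1)) := hκm hME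
      _ ≤ E * κ (t + 1) := concave_scale_s12 hκc hκ0 hE1 (by linarith)
      _ ≤ E * ((2 + κ 2) * κ t) :=
          mul_le_mul_of_nonneg_left (hκshift t ht) (by linarith)
      _ = E * (2 + κ 2) * κ t := by ring
  have hΦ2 := (hΦ1 (α t) (β t)).2
  have hθM : θ M ≤ C₁⁻¹ * (κ M + K₀) := by
    rw [le_inv_mul_iff₀ hC₁]
    exact hθκ M
  have hκt : 1 ≤ κ t := hκ1 t
  have hC₁' : 0 < C₁⁻¹ := inv_pos.mpr hC₁
  have hd : dist (α t) (β t) ≤ n * κ t := hft t ht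
  calc dist (Φ (α t)) (Φ (β t)) ≤ L * dist (α t) (β t) + θ M := hΦ2
    _ ≤ L * (n * κ t) + C₁⁻¹ * (κ M + K₀) := by
        have := mul_le_mul_of_nonneg_left hd (by linarith : (0:ℝ) ≤ L)
        linarith
    _ ≤ L * (n * κ t) + C₁⁻¹ * (E * (2 + κ 2) * κ t + K₀) := by
        have h := mul_le_mul_of_nonneg_left
          (by linarith : κ M + K₀ ≤ E * (2 + κ 2) * κ t + K₀) hC₁'.le
        linarith
    _ ≤ (L * n + C₁⁻¹ * (E * (2 + κ 2) + K₀)) * κ t := by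
        have h1 : E * (2 + κ 2) * κ t + K₀ ≤ (E * (2 + κ 2) + K₀) * κ t := by
          nlinarith
        have h2 := mul_le_mul_of_nonneg_left h1 hC₁'.le
        nlinarith [h2]
end

section
/- Let X be a proper geodesic metric space, 𝔬 a basepoint, and α : [0,∞) → X a map such that for every r > 0 the geodesic segments [𝔬, α(i)] (i ∈ ℕ) eventually lie, within the ball B(𝔬, r), in the set N = N_κ(α, m) for a fixed constant m. Then there exists a geodesic ray a from 𝔬, obtained as a locally uniform limit of a subsequence of the segments [𝔬, α(i)], and this ray satisfies a ⊆ N_κ(α, m). -/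
open Metric Set Filter Topology

private lemma clip_lip (a b c : ℝ) : |min (max a 0) c - min (max b 0) c| ≤ |a - b| := by
  refine (abs_min_sub_min_le_max _ _ _ _).trans (max_le (abs_max_sub_max_le_abs _ _ _) ?_)
  simp [abs_nonneg]

/-- Arzelà–Ascoli limit of geodesic segments: if the geodesic segments
`g i` from `𝔬` to `α(i)` have lengths tending to infinity and eventually lie,
within each ball, in the neighborhood `N_κ(α, m)`, then a subsequence converges
locally uniformly to a geodesic ray `a` from `𝔬` with `a ⊆ N_κ(α, m)`. -/
theorem arzela_ascoli_limit_ray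
    {X : Type*} [MetricSpace X] [ProperSpace X]
    (o : X) (κ : ℝ → ℝ) (hκm : Monotone κ) (m : ℝ) (hm : 0 ≤ m)
    (α : ℝ → X) (g : ℕ → ℝ → X)
    (hg0 : ∀ i : ℕ, g i 0 = o)
    (hgend : ∀ i : ℕ, g i (dist o (α i)) = α i)
    (hgiso : ∀ i : ℕ, ∀ s t : ℝ,
      s ∈ Set.Icc 0 (dist o (α i)) → t ∈ Set.Icc 0 (dist o (α i)) →
      dist (g i s) (g i t) = |s - t|)
    (hlen : Tendsto (fun i : ℕ => dist o (α i)) atTop atTop)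
    (hN : ∀ r > (0:ℝ), ∃ N : ℕ, ∀ i : ℕ, N ≤ i →
      ∀ t ∈ Set.Icc 0 (dist o (α i)), t ≤ r →
        infDist (g i t) (α '' Set.Ici 0) ≤ m * κ (dist (g i t) o)) :
    ∃ a : ℝ → X, a 0 = o ∧
      (∀ s t : ℝ, 0 ≤ s → 0 ≤ t → dist (a s) (a t) = |s - t|) ∧
      (∃ φ : ℕ → ℕ, StrictMono φ ∧
        TendstoLocallyUniformlyOn (fun n => g (φ n)) a atTop (Set.Ici 0)) ∧
      (∀ t : ℝ, 0 ≤ t →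
        infDist (a t) (α '' Set.Ici 0) ≤ m * κ (dist (a t) o)) := by
  classical
  set L : ℕ → ℝ := fun i => dist o (α i) with hL
  have hL0 : ∀ i, 0 ≤ L i := fun i => dist_nonneg
  set c : ℕ → ℝ → ℝ := fun i t => min (max t 0) (L i) with hc
  have hcmem : ∀ i t, c i t ∈ Set.Icc 0 (L i) := fun i t =>
    ⟨le_min (le_max_right _ _) (hL0 i), min_le_right _ _⟩
  set G : ℕ → ℝ → X := fun i t => g i (c i t) with hG
  have hGdist : ∀ i s t, dist (G i s) (G i t) = |c i s - c i t| := fun i s t =>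
    hgiso i _ _ (hcmem i s) (hcmem i t)
  have hGlip : ∀ i s t, dist (G i s) (G i t) ≤ |s - t| := fun i s t => by
    rw [hGdist]; exact clip_lip s t (L i)
  have hciso : ∀ i t, 0 ≤ t → t ≤ L i → c i t = t := fun i t h0 h1 => by
    simp [hc, max_eq_left h0, min_eq_left h1]
  have hG0 : ∀ i, G i 0 = o := fun i => by
    rw [hG]; simp only [hciso i 0 le_rfl (hL0 i)]; exact hg0 i
  have hGball : ∀ i t, G i t ∈ closedBall o (max t 0) := fun i t => by
    rw [mem_closedBall, ← hG0 i, hGdist, hciso i 0 le_rfl (hL0 i), sub_zero,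
      abs_of_nonneg (hcmem i t).1]
    exact min_le_left _ _
  -- extract a subsequence converging at all rational points
  have hScomp : IsCompact (Set.pi (Set.univ : Set ℚ)
      (fun q => closedBall o (max (q : ℝ) 0))) :=
    isCompact_univ_pi fun q => isCompact_closedBall o _
  obtain ⟨f, -, φ, hφ, hconv⟩ := hScomp.tendsto_subseq
    (x := fun i => fun q : ℚ => G i (q : ℝ)) (fun i q _ => hGball i q)
  have hq : ∀ q : ℚ, Tendsto (fun n => G (φ n) (q : ℝ)) atTop (𝓝 (f q)) := fun q =>
    tendsto_pi_nhds.1 hconv q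
  -- convergence at every real point
  have hcauchy : ∀ t : ℝ, ∃ x : X, Tendsto (fun n => G (φ n) t) atTop (𝓝 x) := by
    intro t
    apply cauchySeq_tendsto_of_complete
    rw [Metric.cauchySeq_iff]
    intro ε hε
    obtain ⟨q, hqt⟩ := exists_rat_near t (show (0:ℝ) < ε/4 by linarith)
    have h1 := (hq q).cauchySeq
    rw [Metric.cauchySeq_iff] at h1
    obtain ⟨N, hN'⟩ := h1 (ε/4) (by linarith)
    refine ⟨N, fun k hk n hn => ?_⟩
    have h2 : dist (G (φ k) t) (G (φ k) (q : ℝ)) < ε/4 :=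
      lt_of_le_of_lt (hGlip _ _ _) hqt
    have h3 : dist (G (φ n) (q : ℝ)) (G (φ n) t) < ε/4 :=
      lt_of_le_of_lt (hGlip _ _ _) (by rwa [abs_sub_comm])
    calc dist (G (φ k) t) (G (φ n) t)
        ≤ dist (G (φ k) t) (G (φ k) (q : ℝ)) + dist (G (φ k) (q : ℝ)) (G (φ n) (q : ℝ))
          + dist (G (φ n) (q : ℝ)) (G (φ n) t) := dist_triangle4 _ _ _ _
      _ < ε/4 + ε/4 + ε/4 := by
          have := hN' k hk n hn
          linarith
      _ < ε := by linarith
  choose a ha using hcauchy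
  have evL : ∀ r : ℝ, ∀ᶠ n in atTop, r ≤ L (φ n) := fun r =>
    (hlen.comp hφ.tendsto_atTop).eventually_ge_atTop r
  have ha0 : a 0 = o := by
    refine tendsto_nhds_unique (ha 0) ?_
    simpa only [hG0] using (tendsto_const_nhds : Tendsto (fun _ : ℕ => o) atTop (𝓝 o))
  have haiso : ∀ s t : ℝ, 0 ≤ s → 0 ≤ t → dist (a s) (a t) = |s - t| := by
    intro s t hs ht
    refine tendsto_nhds_unique ((ha s).dist (ha t)) ?_
    have hev : ∀ᶠ n in atTop, dist (G (φ n) s) (G (φ n) t) = |s - t| := by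
      filter_upwards [evL (max s t)] with n hn
      rw [hGdist, hciso _ _ hs (le_trans (le_max_left _ _) hn),
        hciso _ _ ht (le_trans (le_max_right _ _) hn)]
    exact Tendsto.congr' (hev.mono fun n h => h.symm) tendsto_const_nhds
  -- uniform convergence on Icc 0 r
  have hunif : ∀ r : ℝ, 0 ≤ r → ∀ ε > (0:ℝ),
      ∀ᶠ n in atTop, ∀ y ∈ Set.Icc (0:ℝ) r, dist (a y) (G (φ n) y) < ε := by
    intro r hr ε hε
    have hδ0 : 0 < ε/4 := by linarith
    set δ : ℝ := ε/4 with hδ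
    set K := ⌈r / δ⌉₊ with hK
    have hev : ∀ᶠ n in atTop, ∀ j ∈ Finset.range (K+1),
        dist (a ((j:ℝ)*δ)) (G (φ n) ((j:ℝ)*δ)) < δ := by
      rw [eventually_all_finset (Finset.range (K+1))]
      intro j _
      have h2 := (Metric.tendsto_atTop.1 (ha ((j:ℝ)*δ))) δ hδ0
      obtain ⟨N, hN'⟩ := h2
      filter_upwards [eventually_ge_atTop N] with n hn
      rw [dist_comm]; exact hN' n hn
    filter_upwards [hev] with n hn y hy
    obtain ⟨hy0, hyr⟩ := hy
    set j := ⌊y / δ⌋₊ with hj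
    have hjK : j ∈ Finset.range (K+1) := by
      simp only [Finset.mem_range, Nat.lt_succ_iff, hj, hK]
      exact le_trans (Nat.floor_mono (by gcongr)) (Nat.floor_le_ceil _)
    have hjy : (j:ℝ)*δ ≤ y := by
      have h1 : (j:ℝ) ≤ y / δ := Nat.floor_le (by positivity)
      calc (j:ℝ)*δ ≤ (y/δ)*δ := mul_le_mul_of_nonneg_right h1 hδ0.le
        _ = y := div_mul_cancel₀ _ hδ0.ne'
    have hyj : y - (j:ℝ)*δ ≤ δ := by
      have h1 : y / δ < (j:ℝ) + 1 := Nat.lt_floor_add_one _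
      have h2 : y < ((j:ℝ) + 1) * δ := by
        calc y = (y/δ)*δ := (div_mul_cancel₀ _ hδ0.ne').symm
          _ < ((j:ℝ) + 1) * δ := by gcongr
      nlinarith
    have h1 : dist (a y) (a ((j:ℝ)*δ)) ≤ δ := by
      rw [haiso _ _ hy0 (by positivity), abs_of_nonneg (by linarith)]
      linarith
    have h2 := hn j hjK
    have h3 : dist (G (φ n) ((j:ℝ)*δ)) (G (φ n) y) ≤ δ := by
      refine (hGlip _ _ _).trans ?_
      rw [abs_sub_comm, abs_of_nonneg (by linarith)]
      linarith
    calc dist (a y) (G (φ n) y)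
        ≤ dist (a y) (a ((j:ℝ)*δ)) + dist (a ((j:ℝ)*δ)) (G (φ n) ((j:ℝ)*δ))
          + dist (G (φ n) ((j:ℝ)*δ)) (G (φ n) y) := dist_triangle4 _ _ _ _
      _ < δ + δ + δ := by linarith
      _ < ε := by rw [hδ]; linarith
  refine ⟨a, ha0, haiso, ⟨φ, hφ, ?_⟩, ?_⟩
  · -- locally uniform convergence
    intro u hu x hx
    obtain ⟨ε, hε, hball⟩ := Metric.mem_uniformity_dist.1 hu
    refine ⟨Set.Icc 0 (x+1), ?_, ?_⟩
    · refine mem_nhdsWithin.2 ⟨ball x 1, isOpen_ball, mem_ball_self one_pos, ?_⟩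
      rintro y ⟨hy1, hy2⟩
      rw [mem_ball, Real.dist_eq, abs_sub_lt_iff] at hy1
      exact ⟨hy2, by linarith [hy1.1]⟩
    · have hx0 : (0:ℝ) ≤ x := hx
      filter_upwards [hunif (x+1) (by linarith) ε hε, evL (x+1)] with n hn hLn y hy
      have hGg : g (φ n) y = G (φ n) y := by
        rw [hG]
        simp only [hciso _ _ hy.1 (le_trans hy.2 hLn)]
      exact hball (by rw [hGg]; exact hn y hy)
  · -- containment in the neighborhood
    intro t ht
    have hdist : ∀ᶠ n in atTop,
        infDist (G (φ n) t) (α '' Set.Ici 0) ≤ m * κ t := by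
      obtain ⟨N, hN'⟩ := hN (t+1) (by linarith)
      filter_upwards [evL t, eventually_ge_atTop N] with n hLn hn
      have hφn : N ≤ φ n := le_trans hn (hφ.le_apply)
      have htmem : t ∈ Set.Icc 0 (L (φ n)) := ⟨ht, hLn⟩
      have hb := hN' (φ n) hφn t htmem (by linarith)
      have hgo : dist (g (φ n) t) o = t := by
        rw [← hg0 (φ n), hgiso _ t 0 htmem ⟨le_rfl, hL0 _⟩, sub_zero, abs_of_nonneg ht]
      rw [hgo] at hb
      have hGg : G (φ n) t = g (φ n) t := by
        rw [hG]; simp only [hciso _ _ ht hLn]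
      rw [hGg]; exact hb
    have h1 : Tendsto (fun n => infDist (G (φ n) t) (α '' Set.Ici 0)) atTop
        (𝓝 (infDist (a t) (α '' Set.Ici 0))) :=
      ((continuous_infDist_pt (α '' Set.Ici 0)).tendsto (a t)).comp (ha t)
    have h2 := le_of_tendsto h1 hdist
    have hato : dist (a t) o = t := by
      rw [← ha0, haiso t 0 ht le_rfl, sub_zero, abs_of_nonneg ht]
    rw [hato]; exact h2
end
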